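/- arXiv:2405.03422 — 4 statements merged into one kernel-verified Lean document; each statement's English description precedes it below -/
import Mathlib

section
/- Let 0 ≤ l < k ≤ n. For every λ ∈ Γ_k, Σ_{i=1}^{n} ∂[(σ_k(λ)/σ_l(λ))^{1/(k−l)}]/∂λ_i ≥ (C_n^k/C_n^l)^{1/(k−l)}, where C_n^k = binom(n,k). -/
open Finset MeasureTheory Metric Set Bornology Matrix

/-- The `k`-th elementary symmetric function of `x ∈ ℝⁿ`. -/
noncomputable def esymm (n k : ℕ) (x : Fin n → ℝ) : ℝ :=
  ∑ s ∈ Finset.powersetCard k (Finset.univ : Finset (Fin n)), ∏ i ∈ s, x i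

/-- The Gårding cone `Γ_k = {λ : σ_i(λ) > 0 for 1 ≤ i ≤ k}`. -/
def GammaCone (n k : ℕ) : Set (Fin n → ℝ) :=
  {x | ∀ i : ℕ, 1 ≤ i → i ≤ k → 0 < esymm n i x}

/-- `η_i(κ) = ∑_{j ≠ i} κ_j`. -/
def etaVec {n : ℕ} (x : Fin n → ℝ) : Fin n → ℝ :=
  fun i => ∑ j ∈ Finset.univ.erase i, x j

/-- The cone `Γ̃_k = {κ : σ_i(η(κ)) > 0 for 1 ≤ i ≤ k}`. -/
def GammaTilde (n k : ℕ) : Set (Fin n → ℝ) := {x | etaVec x ∈ GammaCone n k}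

/-- `σ_k(x|i)`: the `k`-th elementary symmetric function of `x` with the `i`-th entry removed. -/
noncomputable def esymmRemoved (n k : ℕ) (i : Fin n) (x : Fin n → ℝ) : ℝ :=
  ∑ s ∈ Finset.powersetCard k ((Finset.univ : Finset (Fin n)).erase i), ∏ j ∈ s, x j

lemma key_count {ι : Type*} [DecidableEq ι] (u : Finset ι) (k : ℕ) (x : ι → ℝ) :
    ∑ s ∈ u.powersetCard (k+1), ∑ i ∈ s, ∏ j ∈ s.erase i, x j
      = ((u.card - k : ℕ) : ℝ) * ∑ t ∈ u.powersetCard k, ∏ j ∈ t, x j := by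
  have h1 : ∀ t ∈ u.powersetCard k, ((u.card - k : ℕ) : ℝ) * ∏ j ∈ t, x j
      = ∑ i ∈ u \ t, ∏ j ∈ t, x j := by
    intro t ht
    rw [Finset.mem_powersetCard] at ht
    rw [Finset.sum_const, Finset.card_sdiff_of_subset ht.1, ht.2, nsmul_eq_mul]
  rw [Finset.mul_sum, Finset.sum_congr rfl h1, Finset.sum_sigma', Finset.sum_sigma']
  refine Finset.sum_nbij' (i := fun p => (⟨p.1.erase p.2, p.2⟩ : Σ _ : Finset ι, ι))
    (j := fun p => (⟨insert p.2 p.1, p.2⟩ : Σ _ : Finset ι, ι)) ?_ ?_ ?_ ?_ ?_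
  · rintro ⟨s, i⟩ hp
    simp only [Finset.mem_sigma, Finset.mem_powersetCard] at hp ⊢
    obtain ⟨⟨hsu, hcard⟩, his⟩ := hp
    refine ⟨⟨(Finset.erase_subset _ _).trans hsu, ?_⟩, ?_⟩
    · rw [Finset.card_erase_of_mem his, hcard]; rfl
    · exact Finset.mem_sdiff.2 ⟨hsu his, Finset.notMem_erase _ _⟩
  · rintro ⟨t, i⟩ hp
    simp only [Finset.mem_sigma, Finset.mem_powersetCard, Finset.mem_sdiff] at hp ⊢
    obtain ⟨⟨htu, hcard⟩, hiu, hit⟩ := hp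
    refine ⟨⟨Finset.insert_subset hiu htu, ?_⟩, Finset.mem_insert_self _ _⟩
    rw [Finset.card_insert_of_notMem hit, hcard]
  · rintro ⟨s, i⟩ hp
    simp only [Finset.mem_sigma, Finset.mem_powersetCard] at hp
    simp [Finset.insert_erase hp.2]
  · rintro ⟨t, i⟩ hp
    simp only [Finset.mem_sigma, Finset.mem_powersetCard, Finset.mem_sdiff] at hp
    simp [Finset.erase_insert hp.2.2]
  · rintro ⟨s, i⟩ hp
    rfl

lemma esymm_zero (n : ℕ) (x : Fin n → ℝ) : esymm n 0 x = 1 := by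
  simp [esymm]

lemma esymm_multiset (n k : ℕ) (x : Fin n → ℝ) :
    (Multiset.map x Finset.univ.val).esymm k = esymm n k x := by
  rw [Finset.esymm_map_val]; rfl

lemma exists_fun (s : Multiset ℝ) (N : ℕ) (h : Multiset.card s = N) :
    ∃ y : Fin N → ℝ, Multiset.map y Finset.univ.val = s := by
  induction s using Quotient.inductionOn with
  | _ l =>
    have hl : l.length = N := by simpa using h
    subst hl
    refine ⟨l.get, ?_⟩
    rw [Fin.univ_def]
    show Multiset.map l.get ↑(List.finRange l.length) = _
    rw [Multiset.map_coe, ← List.ofFn_eq_map, List.ofFn_get]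
    rfl

lemma choose_two' (n : ℕ) : 2 * Nat.choose (n+2) 2 = (n+2)*(n+1) := by
  induction n with
  | zero => rfl
  | succ p ih =>
    have h : (p+3).choose 2 = (p+2).choose 1 + (p+2).choose 2 := Nat.choose_succ_succ (p+2) 1
    show 2 * ((p+3).choose 2) = (p+3)*(p+2)
    rw [h, Nat.choose_one_right, Nat.mul_add, ih]
    ring

lemma powersetCard_top (N : ℕ) : Finset.powersetCard N (Finset.univ : Finset (Fin N)) = {Finset.univ} := by
  have h := Finset.powersetCard_self (Finset.univ : Finset (Fin N))
  rwa [Finset.card_univ, Fintype.card_fin] at h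

lemma sum_a (m : ℕ) (x : Fin (m+2) → ℝ) :
    ∑ i, ∏ j ∈ Finset.univ.erase i, x j = esymm (m+2) (m+1) x := by
  have h := key_count (Finset.univ : Finset (Fin (m+2))) (m+1) x
  rw [powersetCard_top, Finset.sum_singleton] at h
  simp only [Finset.card_univ, Fintype.card_fin] at h
  rw [show m + 2 - (m+1) = 1 by omega, Nat.cast_one, one_mul] at h
  exact h

lemma prod_pair_eq (N : ℕ) (x : Fin N → ℝ) (i j : Fin N) (hij : j ≠ i) :
    (∏ t ∈ Finset.univ.erase i, x t) * ∏ t ∈ Finset.univ.erase j, x t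
      = (∏ t, x t) * ∏ t ∈ (Finset.univ.erase i).erase j, x t := by
  have h1 : (∏ t ∈ Finset.univ.erase i, x t) = x j * ∏ t ∈ (Finset.univ.erase i).erase j, x t := by
    rw [Finset.mul_prod_erase _ _ (by simp [hij])]
  have h2 : (∏ t ∈ Finset.univ.erase j, x t) = x i * ∏ t ∈ (Finset.univ.erase j).erase i, x t := by
    rw [Finset.mul_prod_erase _ _ (by simp [Ne.symm hij])]
  have h3 : (∏ t, x t) = x i * ∏ t ∈ Finset.univ.erase i, x t :=
    (Finset.mul_prod_erase _ _ (Finset.mem_univ i)).symm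
  have h4 : (Finset.univ.erase j).erase i = (Finset.univ.erase i).erase j := by
    ext t; simp only [Finset.mem_erase, Finset.mem_univ, and_true]; tauto
  rw [h3, h1, h2, h4]
  ring

lemma esymm_top (N : ℕ) (x : Fin N → ℝ) : esymm N N x = ∏ t, x t := by
  rw [esymm, powersetCard_top, Finset.sum_singleton]

lemma sum_c (m : ℕ) (x : Fin (m+2) → ℝ) :
    ∑ i, ∑ j ∈ Finset.univ.erase i, ∏ t ∈ (Finset.univ.erase i).erase j, x t
      = 2 * esymm (m+2) m x := by
  have step1 : ∀ i : Fin (m+2),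
      ∑ j ∈ Finset.univ.erase i, ∏ t ∈ (Finset.univ.erase i).erase j, x t
        = ∑ t ∈ Finset.powersetCard m (Finset.univ.erase i), ∏ j ∈ t, x j := by
    intro i
    have h := key_count (Finset.univ.erase i) m x
    have hc : (Finset.univ.erase i).card = m + 1 := by
      rw [Finset.card_erase_of_mem (Finset.mem_univ i), Finset.card_univ, Fintype.card_fin]
      omega
    have hpc : Finset.powersetCard (m+1) (Finset.univ.erase i) = {Finset.univ.erase i} := by
      have h2 := Finset.powersetCard_self (Finset.univ.erase i)
      rwa [hc] at h2
    rw [hpc, Finset.sum_singleton, hc] at h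
    rw [show m + 1 - m = 1 by omega, Nat.cast_one, one_mul] at h
    exact h
  rw [Finset.sum_congr rfl (fun i _ => step1 i)]
  have hfilter : ∀ i : Fin (m+2), Finset.powersetCard m (Finset.univ.erase i)
      = (Finset.powersetCard m (Finset.univ : Finset (Fin (m+2)))).filter (fun t => i ∉ t) := by
    intro i
    ext t
    simp only [Finset.mem_powersetCard, Finset.mem_filter, Finset.subset_erase]
    tauto
  rw [Finset.sum_congr rfl (fun i _ => by rw [hfilter i])]
  simp_rw [Finset.sum_filter]
  rw [Finset.sum_comm]
  rw [esymm, Finset.mul_sum]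
  refine Finset.sum_congr rfl ?_
  intro t ht
  rw [Finset.mem_powersetCard] at ht
  rw [← Finset.sum_filter, Finset.sum_const]
  have : (Finset.univ.filter (fun i => i ∉ t)).card = 2 := by
    have h1 : Finset.univ.filter (fun i => i ∉ t) = Finset.univ \ t := by
      ext i; simp [Finset.mem_sdiff]
    rw [h1, Finset.card_sdiff_of_subset ht.1, Finset.card_univ, Fintype.card_fin, ht.2]
    omega
  rw [this]
  push_cast
  ring

lemma prod_identity (m : ℕ) (x : Fin (m+2) → ℝ) :
    esymm (m+2) (m+1) x ^ 2 = (∑ i, (∏ j ∈ Finset.univ.erase i, x j)^2)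
      + 2 * esymm (m+2) m x * esymm (m+2) (m+2) x := by
  classical
  set a : Fin (m+2) → ℝ := fun i => ∏ j ∈ Finset.univ.erase i, x j with ha
  have h1 : esymm (m+2) (m+1) x ^ 2 = ∑ i, ∑ j, a i * a j := by
    rw [← sum_a m x, sq, Finset.sum_mul_sum]
  rw [h1]
  have h2 : ∀ i : Fin (m+2), ∑ j, a i * a j = a i ^ 2 + ∑ j ∈ Finset.univ.erase i, a i * a j := by
    intro i
    rw [← Finset.add_sum_erase _ _ (Finset.mem_univ i), sq]
  rw [Finset.sum_congr rfl (fun i _ => h2 i), Finset.sum_add_distrib]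
  congr 1
  have h3 : ∀ i : Fin (m+2), ∀ j ∈ Finset.univ.erase i,
      a i * a j = esymm (m+2) (m+2) x * ∏ t ∈ (Finset.univ.erase i).erase j, x t := by
    intro i j hj
    rw [Finset.mem_erase] at hj
    rw [esymm_top]
    exact prod_pair_eq (m+2) x i j hj.1
  calc ∑ i, ∑ j ∈ Finset.univ.erase i, a i * a j
      = ∑ i, ∑ j ∈ Finset.univ.erase i,
          esymm (m+2) (m+2) x * ∏ t ∈ (Finset.univ.erase i).erase j, x t := by
        exact Finset.sum_congr rfl (fun i _ => Finset.sum_congr rfl (h3 i))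
    _ = esymm (m+2) (m+2) x * ∑ i, ∑ j ∈ Finset.univ.erase i,
          ∏ t ∈ (Finset.univ.erase i).erase j, x t := by
        rw [Finset.mul_sum]; exact Finset.sum_congr rfl (fun i _ => (Finset.mul_sum _ _ _).symm)
    _ = 2 * esymm (m+2) m x * esymm (m+2) (m+2) x := by rw [sum_c]; ring

lemma newton_base (m : ℕ) (x : Fin (m+2) → ℝ) :
    esymm (m+2) m x / ((m+2).choose m : ℝ) * (esymm (m+2) (m+2) x / ((m+2).choose (m+2) : ℝ))
      ≤ (esymm (m+2) (m+1) x / ((m+2).choose (m+1) : ℝ))^2 := by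
  have hCS : (∑ i, ∏ j ∈ Finset.univ.erase i, x j) ^ 2
      ≤ (m+2 : ℝ) * ∑ i, (∏ j ∈ Finset.univ.erase i, x j)^2 := by
    have h := sq_sum_le_card_mul_sum_sq (s := (Finset.univ : Finset (Fin (m+2))))
      (f := fun i => ∏ j ∈ Finset.univ.erase i, x j)
    simpa using h
  have hid := prod_identity m x
  rw [sum_a m x] at hCS
  have hchoose1 : ((m+2).choose (m+2) : ℝ) = 1 := by rw [Nat.choose_self]; norm_num
  have hchoose2 : ((m+2).choose (m+1) : ℝ) = (m+2 : ℝ) := by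
    rw [Nat.choose_succ_self_right]; push_cast; ring
  have hchoose3 : 2 * ((m+2).choose m : ℝ) = (m+2 : ℝ) * (m+1 : ℝ) := by
    have h := choose_two' m
    have hsymm : (m+2).choose m = (m+2).choose 2 := by
      have := Nat.choose_symm (show 2 ≤ m + 2 by omega)
      rwa [show m + 2 - 2 = m by omega] at this
    rw [hsymm]
    exact_mod_cast congrArg (Nat.cast (R := ℝ)) h
  have hCpos : (0:ℝ) < ((m+2).choose m : ℝ) := by
    exact_mod_cast Nat.choose_pos (by omega)
  rw [hchoose1, hchoose2, div_one, div_pow, div_mul_eq_mul_div, div_le_div_iff₀ hCpos (by positivity)]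
  set S := esymm (m+2) (m+1) x
  set T := ∑ i, (∏ j ∈ Finset.univ.erase i, x j)^2
  nlinarith [hCS, hid, hchoose3, sq_nonneg S, hCpos]

lemma choose_id (N j : ℕ) (h : j ≤ N) :
    (N + 1 - j) * (N+1).choose j = (N+1) * N.choose j := by
  have h1 := Nat.choose_mul_factorial_mul_factorial (show j ≤ N+1 by omega)
  have h2 := Nat.choose_mul_factorial_mul_factorial h
  have e1 : (N+1-j).factorial = (N+1-j) * (N-j).factorial := by
    rw [show N + 1 - j = (N - j) + 1 by omega, Nat.factorial_succ]
  have key : (N + 1 - j) * (N+1).choose j * (j.factorial * (N-j).factorial)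
      = (N+1) * N.choose j * (j.factorial * (N-j).factorial) := by
    calc (N + 1 - j) * (N+1).choose j * (j.factorial * (N-j).factorial)
        = (N+1).choose j * j.factorial * ((N+1-j) * (N-j).factorial) := by ring
      _ = (N+1).choose j * j.factorial * (N+1-j).factorial := by rw [e1]
      _ = (N+1).factorial := h1
      _ = (N+1) * N.factorial := Nat.factorial_succ N
      _ = (N+1) * (N.choose j * j.factorial * (N-j).factorial) := by rw [h2]
      _ = (N+1) * N.choose j * (j.factorial * (N-j).factorial) := by ring
  exact Nat.eq_of_mul_eq_mul_right (by positivity) key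

lemma newton (m : ℕ) : ∀ N, m + 2 ≤ N → ∀ x : Fin N → ℝ,
    esymm N m x / (N.choose m : ℝ) * (esymm N (m+2) x / (N.choose (m+2) : ℝ))
      ≤ (esymm N (m+1) x / (N.choose (m+1) : ℝ))^2 := by
  refine Nat.le_induction ?_ ?_
  · intro x
    simpa using newton_base m x
  · intro N hN IH x
    classical
    set s : Multiset ℝ := Multiset.map x Finset.univ.val with hs
    have hcard : Multiset.card s = N + 1 := by simp [hs]
    set P : Polynomial ℝ := (s.map (fun a => Polynomial.X - Polynomial.C a)).prod with hP
    have hPdeg : P.natDegree = N + 1 := by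
      rw [hP, Polynomial.natDegree_multiset_prod_X_sub_C_eq_card, hcard]
    have hPmonic : P.Monic :=
      Polynomial.monic_multiset_prod_of_monic _ _ (fun a _ => Polynomial.monic_X_sub_C a)
    set Q := Polynomial.derivative P with hQ
    have hQcoeffN : Q.coeff N = (N+1 : ℝ) := by
      rw [hQ, Polynomial.coeff_derivative]
      have h1 : P.coeff (N+1) = 1 := by
        rw [← hPdeg]; exact hPmonic.coeff_natDegree
      rw [h1]; push_cast; ring
    have hQne : Q ≠ 0 := by
      intro h
      rw [h, Polynomial.coeff_zero] at hQcoeffN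
      have : (0:ℝ) < N + 1 := by positivity
      rw [← hQcoeffN] at this
      exact lt_irrefl _ this
    have hQdeg : Q.natDegree = N := by
      have hle : Q.natDegree ≤ N := by
        have := Polynomial.natDegree_derivative_le P
        rw [hPdeg] at this
        rw [hQ]; omega
      have hge : N ≤ Q.natDegree := Polynomial.le_natDegree_of_ne_zero (by
        rw [hQcoeffN]; positivity)
      omega
    have hProots : P.roots = s := by rw [hP]; exact Polynomial.roots_multiset_prod_X_sub_C s
    have hQroots_card : Multiset.card Q.roots = N := by
      have h1 := Polynomial.card_roots_le_derivative P
      have h2 := Polynomial.card_roots' Q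
      rw [← hQ] at h1
      rw [hProots, hcard] at h1
      rw [hQdeg] at h2
      omega
    have hsplits : Q.Splits :=
      Polynomial.splits_iff_card_roots.2 (by rw [hQroots_card, hQdeg])
    have hQfact : Q = Polynomial.C Q.leadingCoeff
        * (Q.roots.map (fun a => Polynomial.X - Polynomial.C a)).prod :=
      hsplits.eq_prod_roots
    have hQlead : Q.leadingCoeff = (N+1 : ℝ) := by
      rw [Polynomial.leadingCoeff, hQdeg, hQcoeffN]
    have hesymm : ∀ j, j ≤ N →
        (N+1 : ℝ) * Q.roots.esymm j = (((N+1-j : ℕ)) : ℝ) * s.esymm j := by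
      intro j hj
      have w1 : Q.coeff (N - j) = P.coeff (N - j + 1) * ((N - j : ℕ) + 1 : ℝ) :=
        Polynomial.coeff_derivative P (N - j)
      have e1 : N - j + 1 = N + 1 - j := by omega
      have w2 : P.coeff (N + 1 - j) = (-1)^j * s.esymm j := by
        rw [hP]
        have hle : N + 1 - j ≤ Multiset.card s := by omega
        rw [Multiset.prod_X_sub_C_coeff s hle]
        rw [hcard, show N + 1 - (N + 1 - j) = j by omega]
      have w3 : Q.coeff (N - j) = (N+1 : ℝ) * ((-1)^j * Q.roots.esymm j) := by
        conv_lhs => rw [hQfact]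
        rw [Polynomial.coeff_C_mul, hQlead]
        have hle2 : N - j ≤ Multiset.card Q.roots := by omega
        rw [Multiset.prod_X_sub_C_coeff _ hle2, hQroots_card,
          show N - (N - j) = j by omega]
      rw [w3, e1, w2] at w1
      have hpow : ((-1:ℝ))^j ≠ 0 := pow_ne_zero j (by norm_num)
      have hcast : (((N+1-j : ℕ)) : ℝ) = ((N - j : ℕ) : ℝ) + 1 := by
        rw [show N+1-j = (N-j)+1 by omega]; push_cast; ring
      apply mul_left_cancel₀ hpow
      rw [hcast]
      calc (-1:ℝ)^j * ((N+1:ℝ) * Q.roots.esymm j)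
          = (N+1 : ℝ) * ((-1)^j * Q.roots.esymm j) := by ring
        _ = (-1)^j * s.esymm j * (((N - j : ℕ) : ℝ) + 1) := w1
        _ = (-1)^j * ((((N - j : ℕ) : ℝ) + 1) * s.esymm j) := by ring
    obtain ⟨y, hy⟩ := exists_fun Q.roots N hQroots_card
    have hes_y : ∀ j, esymm N j y = Q.roots.esymm j := by
      intro j; rw [← esymm_multiset, hy]
    have hes_x : ∀ j, esymm (N+1) j x = s.esymm j := by
      intro j; rw [← esymm_multiset, hs]
    have htrans : ∀ j, j ≤ N →
        esymm N j y / (N.choose j : ℝ) = esymm (N+1) j x / ((N+1).choose j : ℝ) := by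
      intro j hj
      have hid := hesymm j hj
      have hcid : (((N + 1 - j : ℕ)) : ℝ) * ((N+1).choose j : ℝ)
          = ((N+1) : ℝ) * (N.choose j : ℝ) := by
        exact_mod_cast congrArg (Nat.cast (R := ℝ)) (choose_id N j hj)
      have hch1 : ((N.choose j : ℕ) : ℝ) ≠ 0 := by
        exact_mod_cast (Nat.choose_pos hj).ne'
      have hch2 : (((N+1).choose j : ℕ) : ℝ) ≠ 0 := by
        exact_mod_cast (Nat.choose_pos (show j ≤ N+1 by omega)).ne'
      rw [hes_y, hes_x, div_eq_div_iff hch1 hch2]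
      have hN1 : ((N:ℝ)+1) ≠ 0 := by positivity
      apply mul_left_cancel₀ hN1
      calc ((N:ℝ)+1) * (Q.roots.esymm j * ((N+1).choose j : ℝ))
          = ((N+1:ℝ) * Q.roots.esymm j) * ((N+1).choose j : ℝ) := by ring
        _ = (((N + 1 - j : ℕ)) : ℝ) * s.esymm j * ((N+1).choose j : ℝ) := by rw [hid]
        _ = s.esymm j * ((((N + 1 - j : ℕ)) : ℝ) * ((N+1).choose j : ℝ)) := by ring
        _ = s.esymm j * (((N+1) : ℝ) * (N.choose j : ℝ)) := by rw [hcid]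
        _ = ((N:ℝ)+1) * (s.esymm j * (N.choose j : ℝ)) := by ring
    rw [← htrans m (by omega), ← htrans (m+1) (by omega), ← htrans (m+2) (by omega)]
    exact IH y

def GammaCone' (n k : ℕ) : Set (Fin n → ℝ) :=
  {x | ∀ i : ℕ, 1 ≤ i → i ≤ k → 0 < esymm n i x}

section chain

variable {n k l : ℕ} {lam : Fin n → ℝ}

lemma esymm_pos (hlam : lam ∈ GammaCone' n k) {j : ℕ} (hj : j ≤ k) :
    0 < esymm n j lam := by
  rcases Nat.eq_zero_or_pos j with h | h
  · rw [h, esymm_zero]; norm_num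
  · exact hlam j h hj

lemma Q_pos (hlam : lam ∈ GammaCone' n k) (hkn : k ≤ n) {j : ℕ} (hj : j ≤ k) :
    0 < esymm n j lam / (n.choose j : ℝ) := by
  apply div_pos (esymm_pos hlam hj)
  exact_mod_cast Nat.choose_pos (by omega)

lemma ratio_mono (hlam : lam ∈ GammaCone' n k) (hkn : k ≤ n) :
    ∀ i j, 1 ≤ i → i ≤ j → j ≤ k →
      (esymm n (i-1) lam / (n.choose (i-1) : ℝ)) / (esymm n i lam / (n.choose i : ℝ))
        ≤ (esymm n (j-1) lam / (n.choose (j-1) : ℝ)) / (esymm n j lam / (n.choose j : ℝ)) := by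
  intro i j hi hij
  induction j, hij using Nat.le_induction with
  | base => intro _; exact le_refl _
  | succ j hij IH =>
    intro hjk
    have hj1 : 1 ≤ j := le_trans hi hij
    have step : (esymm n (j-1) lam / (n.choose (j-1) : ℝ)) / (esymm n j lam / (n.choose j : ℝ))
        ≤ (esymm n j lam / (n.choose j : ℝ)) / (esymm n (j+1) lam / (n.choose (j+1) : ℝ)) := by
      have hnewton := newton (j-1) n (by omega) lam
      rw [show j - 1 + 1 = j by omega, show j - 1 + 2 = j + 1 by omega] at hnewton
      have hQj : 0 < esymm n j lam / (n.choose j : ℝ) := Q_pos hlam hkn (by omega)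
      have hQj1 : 0 < esymm n (j+1) lam / (n.choose (j+1) : ℝ) := Q_pos hlam hkn (by omega)
      rw [div_le_div_iff₀ hQj hQj1]
      nlinarith [hnewton]
    exact le_trans (IH (by omega)) step

lemma telescope (hlam : lam ∈ GammaCone' n k) (hkn : k ≤ n) (hlk : l < k) :
    ∀ K, l ≤ K → K ≤ k →
      ∏ j ∈ Finset.Ico l K, ((esymm n j lam / (n.choose j : ℝ))
          / (esymm n (j+1) lam / (n.choose (j+1) : ℝ)))
        = (esymm n l lam / (n.choose l : ℝ)) / (esymm n K lam / (n.choose K : ℝ)) := by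
  intro K hlK
  induction K, hlK using Nat.le_induction with
  | base => intro _; rw [Finset.Ico_self, Finset.prod_empty,
      div_self (ne_of_gt (Q_pos hlam hkn (by omega)))]
  | succ K hlK IH =>
    intro hKk
    rw [Finset.prod_Ico_succ_top hlK, IH (by omega)]
    have h1 : 0 < esymm n K lam / (n.choose K : ℝ) := Q_pos hlam hkn (by omega)
    have h2 : 0 < esymm n (K+1) lam / (n.choose (K+1) : ℝ) := Q_pos hlam hkn (by omega)
    have e1 : esymm n K lam ≠ 0 := (esymm_pos hlam (by omega)).ne'
    have e2 : esymm n (K+1) lam ≠ 0 := (esymm_pos hlam (by omega)).ne'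
    have e3 : esymm n l lam ≠ 0 := (esymm_pos hlam (by omega)).ne'
    have c1 : ((n.choose K : ℕ) : ℝ) ≠ 0 := by
      exact_mod_cast (Nat.choose_pos (by omega : K ≤ n)).ne'
    have c2 : ((n.choose (K+1) : ℕ) : ℝ) ≠ 0 := by
      exact_mod_cast (Nat.choose_pos (by omega : K + 1 ≤ n)).ne'
    have c3 : ((n.choose l : ℕ) : ℝ) ≠ 0 := by
      exact_mod_cast (Nat.choose_pos (by omega : l ≤ n)).ne'
    field_simp

lemma chain_ineq (hlam : lam ∈ GammaCone' n k) (hkn : k ≤ n) (hlk : l < k) :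
    ((esymm n l lam / (n.choose l : ℝ)) / (esymm n k lam / (n.choose k : ℝ)))
        ^ ((1 : ℝ)/((k:ℝ)-(l:ℝ)))
      ≤ (esymm n (k-1) lam / (n.choose (k-1) : ℝ)) / (esymm n k lam / (n.choose k : ℝ)) := by
  have hd : ((k - l : ℕ) : ℝ) = (k : ℝ) - (l : ℝ) := by
    rw [Nat.cast_sub hlk.le]
  have hdpos : (0:ℝ) < (k:ℝ) - (l:ℝ) := by
    have h' : (l:ℝ) < (k:ℝ) := by exact_mod_cast hlk
    linarith
  set c : ℝ := (1:ℝ)/((k:ℝ)-(l:ℝ)) with hc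
  set Q : ℕ → ℝ := fun j => esymm n j lam / (n.choose j : ℝ) with hQdef
  set r : ℕ → ℝ := fun j => Q (j-1) / Q j with hr
  show (Q l / Q k) ^ c ≤ r k
  have hrpos : ∀ j, 1 ≤ j → j ≤ k → 0 < r j := fun j h1 h2 =>
    div_pos (Q_pos hlam hkn (by omega)) (Q_pos hlam hkn h2)
  have hcard : (Finset.Ico l k).card = k - l := Nat.card_Ico l k
  have hsum_w : ∑ _j ∈ Finset.Ico l k, c = 1 := by
    rw [Finset.sum_const, hcard, nsmul_eq_mul, hd, hc, mul_one_div, div_self hdpos.ne']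
  have hAMGM := Real.geom_mean_le_arith_mean_weighted (Finset.Ico l k) (fun _ => c)
    (fun j => r (j+1)) (fun i _ => by positivity) hsum_w
    (fun j hj => by
      rw [Finset.mem_Ico] at hj
      exact (hrpos (j+1) (by omega) (by omega)).le)
  have hprod : ∏ j ∈ Finset.Ico l k, r (j+1) = Q l / Q k := by
    have htel := telescope hlam hkn hlk k hlk.le le_rfl
    rw [← htel]
    refine Finset.prod_congr rfl ?_
    intro j hj
    rw [hr]
    simp only [Nat.add_sub_cancel]
    rfl
  have hLHS : (Q l / Q k) ^ c = ∏ j ∈ Finset.Ico l k, r (j+1) ^ c := by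
    rw [Real.finset_prod_rpow (Finset.Ico l k) (fun j => r (j+1))
      (fun j hj => by
        rw [Finset.mem_Ico] at hj
        exact (hrpos (j+1) (by omega) (by omega)).le) c, hprod]

  have hsum_le : ∑ j ∈ Finset.Ico l k, c * r (j+1) ≤ r k := by
    have h1 : ∀ j ∈ Finset.Ico l k, c * r (j+1) ≤ c * r k := by
      intro j hj
      rw [Finset.mem_Ico] at hj
      have hmono := ratio_mono hlam hkn (j+1) k (by omega) (by omega) le_rfl
      exact mul_le_mul_of_nonneg_left hmono (by positivity)
    calc ∑ j ∈ Finset.Ico l k, c * r (j+1)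
        ≤ ∑ _j ∈ Finset.Ico l k, c * r k := Finset.sum_le_sum h1
      _ = ((k - l : ℕ) : ℝ) * (c * r k) := by
          rw [Finset.sum_const, hcard, nsmul_eq_mul]
      _ = r k := by rw [hd, hc]; field_simp
  calc (Q l / Q k) ^ c = ∏ j ∈ Finset.Ico l k, r (j+1) ^ c := hLHS
    _ ≤ ∑ j ∈ Finset.Ico l k, c * r (j+1) := hAMGM
    _ ≤ r k := hsum_le

end chain

lemma differentiableAt_esymm (n j : ℕ) (x : Fin n → ℝ) :
    DifferentiableAt ℝ (esymm n j) x := by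
  apply DifferentiableAt.fun_sum
  intro s _
  exact (HasFDerivAt.finset_prod (fun i _ =>
    (ContinuousLinearMap.proj (R := ℝ) (φ := fun _ : Fin n => ℝ) i).hasFDerivAt)).differentiableAt

lemma hasDerivAt_esymm_line (n m : ℕ) (lam : Fin n → ℝ) :
    HasDerivAt (fun t : ℝ => esymm n (m+1) (lam + t • (1 : Fin n → ℝ)))
      (((n - m : ℕ) : ℝ) * esymm n m lam) 0 := by
  have hfun : (fun t : ℝ => esymm n (m+1) (lam + t • (1 : Fin n → ℝ)))
      = fun t : ℝ => ∑ s ∈ Finset.powersetCard (m+1) (Finset.univ : Finset (Fin n)),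
          ∏ i ∈ s, (lam i + t) := by
    funext t
    rw [esymm]
    refine Finset.sum_congr rfl fun s _ => Finset.prod_congr rfl fun i _ => ?_
    simp
  rw [hfun]
  have h := HasDerivAt.fun_sum (u := Finset.powersetCard (m+1) (Finset.univ : Finset (Fin n)))
    (A := fun s t => ∏ i ∈ s, (lam i + t))
    (A' := fun s => ∑ i ∈ s, ∏ j ∈ s.erase i, lam j) (x := (0:ℝ))
    (fun s _ => by
      have hp := HasDerivAt.fun_finsetProd (u := s) (f := fun i t => lam i + t)
        (f' := fun _ => (1:ℝ)) (x := (0:ℝ)) (fun i _ => (hasDerivAt_id (0:ℝ)).const_add (lam i))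
      simpa using hp)
  have hkey := key_count (Finset.univ : Finset (Fin n)) m lam
  rw [Finset.card_univ, Fintype.card_fin] at hkey
  rw [hkey] at h
  exact h

set_option maxHeartbeats 1000000 in
theorem statement_7' (n k l : ℕ) (hlk : l < k) (hkn : k ≤ n)
    (lam : Fin n → ℝ) (hlam : lam ∈ GammaCone' n k) :
    ((n.choose k : ℝ) / (n.choose l : ℝ)) ^ ((1 : ℝ) / ((k : ℝ) - (l : ℝ))) ≤
      ∑ i : Fin n,
        fderiv ℝ (fun y : Fin n → ℝ =>
            (esymm n k y / esymm n l y) ^ ((1 : ℝ) / ((k : ℝ) - (l : ℝ)))) lam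
          (Pi.single i 1) := by
  classical
  have hlam' : lam ∈ GammaCone' n k := hlam
  have hk1 : 1 ≤ k := by omega
  have hdpos : (0:ℝ) < (k:ℝ) - (l:ℝ) := by
    have h' : (l:ℝ) < (k:ℝ) := by exact_mod_cast hlk
    linarith
  set c : ℝ := (1:ℝ)/((k:ℝ)-(l:ℝ)) with hc
  have hcpos : 0 < c := by positivity
  set f : (Fin n → ℝ) → ℝ := fun y : Fin n → ℝ =>
    (esymm n k y / esymm n l y) ^ c with hf
  set U : ℝ := esymm n k lam with hUdef
  set V : ℝ := esymm n l lam with hVdef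
  have hU : 0 < U := esymm_pos hlam' le_rfl
  have hV : 0 < V := esymm_pos hlam' hlk.le
  have hR : 0 < U / V := div_pos hU hV
  -- differentiability
  have hdiv : DifferentiableAt ℝ (fun y : Fin n → ℝ => esymm n k y / esymm n l y) lam := by
    simp only [div_eq_mul_inv]
    exact (differentiableAt_esymm n k lam).mul ((differentiableAt_esymm n l lam).inv hV.ne')
  have hdf : DifferentiableAt ℝ f lam := hdiv.rpow_const (Or.inl hR.ne')
  -- line derivative, abstract
  have h0 : lam + (0:ℝ) • (1 : Fin n → ℝ) = lam := by simp
  have hline : HasDerivAt (fun t : ℝ => lam + t • (1 : Fin n → ℝ)) (1 : Fin n → ℝ) 0 := by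
    have h := ((hasDerivAt_id (0:ℝ)).smul_const (1 : Fin n → ℝ)).const_add lam
    simpa using h
  have hf2 : HasFDerivAt f (fderiv ℝ f lam) (lam + (0:ℝ) • (1 : Fin n → ℝ)) := by
    rw [h0]; exact hdf.hasFDerivAt
  have hcomp : HasDerivAt (fun t : ℝ => f (lam + t • (1 : Fin n → ℝ)))
      (fderiv ℝ f lam (1 : Fin n → ℝ)) 0 := HasFDerivAt.comp_hasDerivAt (l := f) 0 hf2 hline
  -- explicit line derivatives
  set u' : ℝ := ((n - (k-1) : ℕ) : ℝ) * esymm n (k-1) lam with hu'def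
  have hUline : HasDerivAt (fun t : ℝ => esymm n k (lam + t • (1 : Fin n → ℝ))) u' 0 := by
    have h := hasDerivAt_esymm_line n (k-1) lam
    rw [show k - 1 + 1 = k by omega] at h
    exact h
  set v' : ℝ := if l = 0 then 0 else ((n - (l-1) : ℕ) : ℝ) * esymm n (l-1) lam with hv'def
  have hVline : HasDerivAt (fun t : ℝ => esymm n l (lam + t • (1 : Fin n → ℝ))) v' 0 := by
    rcases Nat.eq_zero_or_pos l with hl0 | hl0
    · subst hl0
      rw [hv'def]
      simp only [if_pos rfl]
      have hconst : (fun t : ℝ => esymm n 0 (lam + t • (1 : Fin n → ℝ))) = fun _ : ℝ => (1:ℝ) :=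
        funext fun t => esymm_zero n _
      rw [hconst]
      exact hasDerivAt_const _ _
    · have h := hasDerivAt_esymm_line n (l-1) lam
      rw [show l - 1 + 1 = l by omega] at h
      rw [hv'def, if_neg (by omega)]
      exact h
  have hQuot : HasDerivAt
      (fun t : ℝ => esymm n k (lam + t • (1 : Fin n → ℝ)) / esymm n l (lam + t • (1 : Fin n → ℝ)))
      ((u' * V - U * v') / V^2) 0 := by
    have h := hUline.div hVline (by rw [h0]; exact hV.ne')
    rw [h0] at h
    exact h
  have hg : HasDerivAt (fun t : ℝ =>
      (esymm n k (lam + t • (1 : Fin n → ℝ)) / esymm n l (lam + t • (1 : Fin n → ℝ))) ^ c)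
      ((u' * V - U * v') / V^2 * c * (U/V)^(c-1)) 0 := by
    have h := hQuot.rpow_const (p := c) (Or.inl (by rw [h0]; exact hR.ne'))
    rw [h0] at h
    exact h
  have huniq : fderiv ℝ f lam (1 : Fin n → ℝ) = (u' * V - U * v') / V^2 * c * (U/V)^(c-1) :=
    hcomp.unique hg
  have hsum : ∑ i : Fin n, fderiv ℝ f lam (Pi.single i 1)
      = fderiv ℝ f lam (1 : Fin n → ℝ) := by
    rw [← map_sum]
    congr 1
    funext j
    rw [Finset.sum_apply]
    simp [Pi.single_apply]
  rw [hsum, huniq]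
  -- algebra endgame
  have hchain := chain_ineq hlam' hkn hlk
  rw [← hc, ← hUdef, ← hVdef] at hchain
  have hQk : 0 < U / (n.choose k : ℝ) := Q_pos hlam' hkn le_rfl
  have hQl : 0 < V / (n.choose l : ℝ) := Q_pos hlam' hkn hlk.le
  have hQk1 : 0 < esymm n (k-1) lam / (n.choose (k-1) : ℝ) := Q_pos hlam' hkn (by omega)
  have hCk : (0:ℝ) < (n.choose k : ℝ) := by exact_mod_cast Nat.choose_pos (by omega)
  have hCl : (0:ℝ) < (n.choose l : ℝ) := by exact_mod_cast Nat.choose_pos (by omega)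
  have hCk1 : (0:ℝ) < (n.choose (k-1) : ℝ) := by exact_mod_cast Nat.choose_pos (by omega)
  have hEk1 : 0 < esymm n (k-1) lam := esymm_pos hlam' (by omega)
  -- choose identity for k
  have hNatk : (n.choose k : ℝ) * (k:ℝ) = (n.choose (k-1) : ℝ) * ((n - (k-1) : ℕ) : ℝ) := by
    have h := Nat.choose_succ_right_eq n (k-1)
    rw [show k - 1 + 1 = k by omega] at h
    exact_mod_cast congrArg (Nat.cast (R := ℝ)) h
  have ha : ((n - (k-1) : ℕ) : ℝ) = (k:ℝ) * (n.choose k : ℝ) / (n.choose (k-1) : ℝ) := by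
    field_simp
    linarith [hNatk]
  -- main identity e1
  have hrpow : (U/V)^(c-1) = (U/V)^c / (U/V) := by
    rw [Real.rpow_sub hR, Real.rpow_one]
  have e1 : (u' * V - U * v') / V^2 * c * (U/V)^(c-1)
      = c * (U/V)^c * ((k:ℝ) * ((esymm n (k-1) lam / (n.choose (k-1) : ℝ)) / (U / (n.choose k : ℝ)))
          - (l:ℝ) * ((esymm n (l-1) lam / (n.choose (l-1) : ℝ)) / (V / (n.choose l : ℝ)))) := by
    rw [hrpow, hu'def, ha]
    rcases Nat.eq_zero_or_pos l with hl0 | hl0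
    · subst hl0
      rw [hv'def]
      simp only [if_pos rfl, Nat.cast_zero, ↓reduceIte]
      field_simp
      ring
    · have hCl1 : (0:ℝ) < (n.choose (l-1) : ℝ) := by exact_mod_cast Nat.choose_pos (by omega)
      have hNatl : (n.choose l : ℝ) * (l:ℝ) = (n.choose (l-1) : ℝ) * ((n - (l-1) : ℕ) : ℝ) := by
        have h := Nat.choose_succ_right_eq n (l-1)
        rw [show l - 1 + 1 = l by omega] at h
        exact_mod_cast congrArg (Nat.cast (R := ℝ)) h
      have hb : ((n - (l-1) : ℕ) : ℝ) = (l:ℝ) * (n.choose l : ℝ) / (n.choose (l-1) : ℝ) := by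
        field_simp
        linarith [hNatl]
      rw [hv'def, if_neg (by omega), hb]
      field_simp
  rw [e1]
  -- inequality side
  have hT : (l:ℝ) * ((esymm n (l-1) lam / (n.choose (l-1) : ℝ)) / (V / (n.choose l : ℝ)))
      ≤ (l:ℝ) * ((esymm n (k-1) lam / (n.choose (k-1) : ℝ)) / (U / (n.choose k : ℝ))) := by
    rcases Nat.eq_zero_or_pos l with hl0 | hl0
    · subst hl0; simp
    · have hmono := ratio_mono hlam' hkn l k hl0 hlk.le le_rfl
      rw [← hUdef, ← hVdef] at hmono
      exact mul_le_mul_of_nonneg_left hmono (by positivity)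
  have hS : ((k:ℝ)-(l:ℝ)) * ((V / (n.choose l : ℝ)) / (U / (n.choose k : ℝ)))^c
      ≤ (k:ℝ) * ((esymm n (k-1) lam / (n.choose (k-1) : ℝ)) / (U / (n.choose k : ℝ)))
        - (l:ℝ) * ((esymm n (l-1) lam / (n.choose (l-1) : ℝ)) / (V / (n.choose l : ℝ))) := by
    nlinarith [hchain, hT, hdpos]
  have hAB : (U/V) * ((V / (n.choose l : ℝ)) / (U / (n.choose k : ℝ)))
      = (n.choose k : ℝ) / (n.choose l : ℝ) := by
    field_simp
  have step1 : c * (U/V)^c * (((k:ℝ)-(l:ℝ))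
        * ((V / (n.choose l : ℝ)) / (U / (n.choose k : ℝ)))^c)
      = ((n.choose k : ℝ) / (n.choose l : ℝ))^c := by
    rw [← hAB, Real.mul_rpow (by positivity) (by positivity), hc]
    field_simp
  calc ((n.choose k : ℝ) / (n.choose l : ℝ))^c
      = c * (U/V)^c * (((k:ℝ)-(l:ℝ))
          * ((V / (n.choose l : ℝ)) / (U / (n.choose k : ℝ)))^c) := step1.symm
    _ ≤ c * (U/V)^c * ((k:ℝ) * ((esymm n (k-1) lam / (n.choose (k-1) : ℝ)) / (U / (n.choose k : ℝ)))
          - (l:ℝ) * ((esymm n (l-1) lam / (n.choose (l-1) : ℝ)) / (V / (n.choose l : ℝ)))) :=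
        mul_le_mul_of_nonneg_left hS (by positivity)

/-- For `0 ≤ l < k ≤ n` and every `λ ∈ Γ_k`,
`∑_i ∂[(σ_k(λ)/σ_l(λ))^{1/(k−l)}]/∂λ_i ≥ (C_n^k/C_n^l)^{1/(k−l)}`. -/
theorem statement_7 (n k l : ℕ) (hlk : l < k) (hkn : k ≤ n)
    (lam : Fin n → ℝ) (hlam : lam ∈ GammaCone n k) :
    ((n.choose k : ℝ) / (n.choose l : ℝ)) ^ ((1 : ℝ) / ((k : ℝ) - (l : ℝ))) ≤
      ∑ i : Fin n,
        fderiv ℝ (fun y : Fin n → ℝ =>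
            (esymm n k y / esymm n l y) ^ ((1 : ℝ) / ((k : ℝ) - (l : ℝ)))) lam
          (Pi.single i 1) := by
  exact statement_7' n k l hlk hkn lam hlam
end

section
/- Let 1 ≤ k ≤ n and λ ∈ Γ_k with λ_1 ≥ λ_2 ≥ ⋯ ≥ λ_n. Then σ_{k−1}(λ|1) ≤ σ_{k−1}(λ|2) ≤ ⋯ ≤ σ_{k−1}(λ|n). -/
open Finset MeasureTheory Metric Set Bornology Matrix

namespace MyNewton

open Polynomial


lemma esymm_zero (s : Multiset ℝ) : s.esymm 0 = 1 := by
  simp [Multiset.esymm]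

lemma esymm_cons (a : ℝ) (s : Multiset ℝ) (k : ℕ) :
    (a ::ₘ s).esymm (k + 1) = s.esymm (k + 1) + a * s.esymm k := by
  simp only [Multiset.esymm, Multiset.powersetCard_cons, Multiset.map_add, Multiset.sum_add,
    Multiset.map_map, Function.comp_def, Multiset.prod_cons, ← Multiset.sum_map_mul_left]

lemma esymm_eq_zero (s : Multiset ℝ) (k : ℕ) (h : Multiset.card s < k) : s.esymm k = 0 := by
  simp [Multiset.esymm, Multiset.powersetCard_eq_empty _ h]

lemma esymm_card (s : Multiset ℝ) : s.esymm (Multiset.card s) = s.prod := by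
  induction s using Multiset.induction with
  | empty => simp [Multiset.esymm]
  | cons a s ih =>
      rw [Multiset.card_cons, esymm_cons, esymm_eq_zero s _ (Nat.lt_succ_self _), ih,
        Multiset.prod_cons, zero_add]

lemma esymm_one' (s : Multiset ℝ) : s.esymm 1 = s.sum := by
  induction s using Multiset.induction with
  | empty => simp [Multiset.esymm, Multiset.powersetCard_zero_right]
  | cons a s ih =>
      rw [show (1:ℕ) = 0 + 1 from rfl, esymm_cons, esymm_zero]
      simp [ih]; ring

lemma esymm_two (s : Multiset ℝ) :
    2 * s.esymm 2 = s.sum ^ 2 - (s.map (fun x => x ^ 2)).sum := by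
  induction s using Multiset.induction with
  | empty => simp [Multiset.esymm, Multiset.powersetCard_zero_right]
  | cons a s ih =>
      have h := esymm_cons a s 1
      norm_num at h
      rw [h, esymm_one']
      simp only [Multiset.sum_cons, Multiset.map_cons, Multiset.sum_cons]
      linear_combination ih

lemma sq_sum_nonneg (s : Multiset ℝ) : 0 ≤ (s.map (fun x => x ^ 2)).sum := by
  apply Multiset.sum_nonneg
  intro x hx
  obtain ⟨y, -, rfl⟩ := Multiset.mem_map.1 hx
  positivity

lemma cs_multiset (s : Multiset ℝ) :
    s.sum ^ 2 ≤ (Multiset.card s) * (s.map (fun x => x ^ 2)).sum := by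
  induction s using Multiset.induction with
  | empty => simp
  | cons a s ih =>
      rcases eq_or_ne s 0 with rfl | hs
      · simp
      · have hM : (1:ℝ) ≤ (Multiset.card s : ℝ) := by
          have := Multiset.card_pos.2 hs
          exact_mod_cast this
        simp only [Multiset.sum_cons, Multiset.card_cons, Multiset.map_cons, Multiset.sum_cons]
        push_cast
        nlinarith [ih, sq_nonneg ((Multiset.card s : ℝ) * a - s.sum), hM, sq_sum_nonneg s]



lemma esymm_reciprocal (s : Multiset ℝ) (h0 : (0:ℝ) ∉ s) :
    ∀ j : ℕ, j ≤ Multiset.card s →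
      s.esymm j = s.prod * ((s.map Inv.inv).esymm (Multiset.card s - j)) := by
  induction s using Multiset.induction with
  | empty =>
      intro j hj
      simp only [Multiset.card_zero, Nat.le_zero] at hj
      subst hj
      simp [esymm_zero]
  | cons a s ih =>
      have ha : a ≠ 0 := fun h => h0 (h ▸ Multiset.mem_cons_self a s)
      have h0s : (0:ℝ) ∉ s := fun h => h0 (Multiset.mem_cons_of_mem h)
      have hP : s.prod ≠ 0 := Multiset.prod_ne_zero h0s
      intro j hj
      rw [Multiset.map_cons, Multiset.prod_cons, Multiset.card_cons]
      rcases j with _ | j'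
      · rw [esymm_zero, Nat.sub_zero]
        have hc : Multiset.card s + 1 = Multiset.card (a⁻¹ ::ₘ s.map Inv.inv) := by simp
        rw [hc, esymm_card, Multiset.prod_cons, Multiset.prod_map_inv, Multiset.map_id']
        field_simp
      · rw [esymm_cons]
        rcases Nat.lt_or_ge j' (Multiset.card s) with hlt | hge
        · have hsub : Multiset.card s + 1 - (j' + 1) = (Multiset.card s - (j' + 1)) + 1 := by
            omega
          have hsub2 : Multiset.card s - j' = (Multiset.card s - (j' + 1)) + 1 := by omega
          rw [hsub, esymm_cons, ih h0s _ hlt, ih h0s _ hlt.le, hsub2]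
          field_simp
          ring
        · have hj'' : j' = Multiset.card s := by
            rw [Multiset.card_cons] at hj; omega
          subst hj''
          rw [esymm_eq_zero s _ (Nat.lt_succ_self _), esymm_card, Nat.sub_self, esymm_zero]
          ring

lemma newton_m1 (s : Multiset ℝ) :
    ((Multiset.card s).choose 2 : ℝ) * s.esymm 1 ^ 2 ≥
      (Multiset.card s : ℝ) ^ 2 * s.esymm 2 := by
  set M := Multiset.card s with hM
  rcases Nat.lt_or_ge M 2 with h | h
  · rw [esymm_eq_zero s 2 h, mul_zero]
    positivity
  · have h2n : 2 * M.choose 2 = M * M - M := by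
      rw [Nat.choose_two_right, Nat.mul_div_cancel' (Nat.even_mul_pred_self M).two_dvd]
      cases M with
      | zero => simp
      | succ M' =>
          rw [Nat.succ_sub_one]
          conv_rhs => rw [Nat.mul_succ, Nat.add_sub_cancel]
    have h2 : 2 * (M.choose 2 : ℝ) = (M:ℝ) * (M:ℝ) - (M:ℝ) := by
      have h1M : M ≤ M * M := Nat.le_mul_of_pos_left M (by omega)
      have hc := congrArg (Nat.cast (R := ℝ)) h2n
      rw [Nat.cast_sub h1M] at hc
      push_cast at hc
      linarith [hc]
    rw [esymm_one']
    have ht := esymm_two s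
    have hcs := cs_multiset s
    nlinarith [ht, hcs, mul_le_mul_of_nonneg_left hcs (Nat.cast_nonneg (α := ℝ) M), h2]

lemma newton_top (V : Multiset ℝ) (m : ℕ) (hcard : Multiset.card V = m + 2) :
    ((m+2).choose (m+1) : ℝ)^2 * (V.esymm m * V.esymm (m+2)) ≤
      ((m+2).choose m : ℝ) * V.esymm (m+1) ^ 2 := by
  have hch2 : (m+2).choose m = (m+2).choose 2 := by
    rw [← Nat.choose_symm (by omega : m ≤ m + 2)]
    congr 1
    omega
  have hch1 : (m+2).choose (m+1) = m+2 := by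
    rw [← Nat.choose_symm (by omega : m+1 ≤ m + 2), show m + 2 - (m+1) = 1 from by omega,
      Nat.choose_one_right]
  by_cases h0 : (0:ℝ) ∈ V
  · have : V.esymm (m+2) = 0 := by
      rw [← hcard, esymm_card]
      exact Multiset.prod_eq_zero h0
    rw [this]
    have : (0:ℝ) ≤ ((m+2).choose m : ℝ) * V.esymm (m+1) ^ 2 := by positivity
    nlinarith [this]
  · set W := V.map Inv.inv with hW
    have hcW : Multiset.card W = m + 2 := by simp [hW, hcard]
    have e1 : V.esymm (m+1) = V.prod * W.esymm 1 := by
      have := esymm_reciprocal V h0 (m+1) (by omega)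
      rwa [hcard, show m + 2 - (m+1) = 1 by omega] at this
    have e2 : V.esymm m = V.prod * W.esymm 2 := by
      have := esymm_reciprocal V h0 m (by omega)
      rwa [hcard, show m + 2 - m = 2 by omega] at this
    have e0 : V.esymm (m+2) = V.prod := by rw [← hcard, esymm_card]
    have hm1 := newton_m1 W
    rw [hcW] at hm1
    rw [e1, e2, e0, hch2, hch1]
    nlinarith [hm1, sq_nonneg V.prod, mul_le_mul_of_nonneg_left hm1 (sq_nonneg V.prod)]


lemma rr_derivative (p : ℝ[X]) (h : Multiset.card p.roots = p.natDegree) :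
    Multiset.card (derivative p).roots = (derivative p).natDegree := by
  have h1 := p.card_roots_le_derivative
  have h2 := natDegree_derivative_le p
  have h3 := (derivative p).card_roots'
  omega

lemma rr_iterate (p : ℝ[X]) (h : Multiset.card p.roots = p.natDegree) (j : ℕ) :
    Multiset.card (derivative^[j] p).roots = (derivative^[j] p).natDegree := by
  induction j with
  | zero => exact h
  | succ j ih => rw [Function.iterate_succ_apply']; exact rr_derivative _ ih

lemma natDegree_iterate (p : ℝ[X]) (hm : p.Monic) (j : ℕ) (hj : j ≤ p.natDegree) :
    (derivative^[j] p).natDegree = p.natDegree - j := by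
  refine le_antisymm (natDegree_iterate_derivative p j) (le_natDegree_of_ne_zero ?_)
  rw [coeff_iterate_derivative, Nat.sub_add_cancel hj, hm.coeff_natDegree, nsmul_eq_mul, mul_one]
  intro hc
  have := Nat.descFactorial_eq_zero_iff_lt.mp (by exact_mod_cast hc)
  omega

-- trinomial-revision style identity
lemma KI (N t i M : ℕ) (hNt : N = M + t) (hi : i ≤ M) :
    (N - i).descFactorial t * N.choose i = N.descFactorial t * M.choose i := by
  have hiN : i ≤ N := by omega
  have htN : t ≤ N := by omega
  apply Nat.eq_of_mul_eq_mul_right (Nat.factorial_pos i)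
  have e1 : (N - i).descFactorial t * N.choose i * i.factorial
      = (N - i).descFactorial ((i + t) - i) * N.descFactorial i := by
    rw [Nat.descFactorial_eq_factorial_mul_choose N i, Nat.add_sub_cancel_left]
    ring
  have e2 : N.descFactorial t * M.choose i * i.factorial
      = (N - t).descFactorial ((t + i) - t) * N.descFactorial t := by
    rw [show N - t = M from by omega, Nat.add_sub_cancel_left,
      Nat.descFactorial_eq_factorial_mul_choose M i]
    ring
  rw [e1, e2, Nat.descFactorial_mul_descFactorial (by omega : i ≤ i + t),
    Nat.descFactorial_mul_descFactorial (by omega : t ≤ t + i), Nat.add_comm i t]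

theorem newton (S : Multiset ℝ) (m : ℕ) (h : m + 2 ≤ Multiset.card S) :
    ((Multiset.card S).choose (m+1) : ℝ)^2 * (S.esymm m * S.esymm (m+2)) ≤
      ((Multiset.card S).choose m * (Multiset.card S).choose (m+2) : ℝ) * S.esymm (m+1) ^ 2 := by
  set N := Multiset.card S with hN
  set t := N - (m+2) with ht
  set p := (S.map (fun r => X + C r)).prod with hp
  have hpm : p.Monic := monic_multiset_prod_of_monic _ _ (fun a _ => monic_X_add_C a)
  have hpalt : p = ((S.map (fun r : ℝ => -r)).map (fun a => X - C a)).prod := by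
    rw [Multiset.map_map]
    apply congr_arg
    apply Multiset.map_congr rfl
    intro r _
    simp [sub_neg_eq_add]
  have hpdeg : p.natDegree = N := by
    rw [hpalt, natDegree_multiset_prod_X_sub_C_eq_card, Multiset.card_map]
  have hproots : Multiset.card p.roots = p.natDegree := by
    rw [hpalt, roots_multiset_prod_X_sub_C, Multiset.card_map, ← hpalt, hpdeg]
  set q := derivative^[t] p with hq
  have hqdeg : q.natDegree = m + 2 := by
    rw [hq, natDegree_iterate p hpm t (by omega), hpdeg]; omega
  have hqroots : Multiset.card q.roots = m + 2 := by
    rw [hq, rr_iterate p hproots t, ← hq, hqdeg]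
  have hqsplits : q.Splits := splits_iff_card_roots.mpr (by rw [hqroots, hqdeg])
  set V : Multiset ℝ := q.roots.map (fun a => -a) with hV
  have hcV : Multiset.card V = m + 2 := by rw [hV, Multiset.card_map, hqroots]
  have hqfact : q = C q.leadingCoeff * (V.map (fun v => X + C v)).prod := by
    rw [hV, Multiset.map_map]
    have := hqsplits.eq_prod_roots
    convert this using 3
    apply Multiset.map_congr rfl
    intro r _
    simp [sub_eq_add_neg]
  have hlead : q.leadingCoeff = (N.descFactorial t : ℝ) := by
    rw [leadingCoeff, hqdeg, hq, coeff_iterate_derivative, show m + 2 + t = N from by omega,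
      ← hpdeg, hpm.coeff_natDegree, nsmul_eq_mul, mul_one]
  have key : ∀ i, i ≤ m + 2 → (N.descFactorial t : ℝ) * V.esymm i
      = ((N - i).descFactorial t : ℝ) * S.esymm i := by
    intro i hi
    have c1 : q.coeff (m + 2 - i) = q.leadingCoeff * V.esymm i := by
      conv_lhs => rw [hqfact]
      rw [coeff_C_mul, Multiset.prod_X_add_C_coeff V (by omega : m + 2 - i ≤ Multiset.card V),
        hcV, show m + 2 - (m + 2 - i) = i from by omega]
    have c2 : q.coeff (m + 2 - i) = ((N - i).descFactorial t : ℝ) * S.esymm i := by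
      rw [hq, coeff_iterate_derivative, show m + 2 - i + t = N - i from by omega, nsmul_eq_mul]
      congr 1
      rw [hp, Multiset.prod_X_add_C_coeff S (by omega : N - i ≤ Multiset.card S),
        show Multiset.card S - (N - i) = i from by omega]
    rw [← hlead, ← c1, c2]
  have hdpos : ∀ i, i ≤ m + 2 → (0:ℝ) < ((N - i).descFactorial t : ℝ) := by
    intro i hi
    have h1 : (N - i).descFactorial t ≠ 0 := by
      intro hc
      have := Nat.descFactorial_eq_zero_iff_lt.mp hc
      omega
    positivity
  have hd'pos : (0:ℝ) < (N.descFactorial t : ℝ) := by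
    have h1 : N.descFactorial t ≠ 0 := by
      intro hc
      have := Nat.descFactorial_eq_zero_iff_lt.mp hc
      omega
    positivity
  have k0 := key m (by omega)
  have k1 := key (m+1) (by omega)
  have k2 := key (m+2) (by omega)
  have K0 : ((N - m).descFactorial t : ℝ) * (N.choose m : ℝ)
      = (N.descFactorial t : ℝ) * ((m+2).choose m : ℝ) := by
    exact_mod_cast congrArg (Nat.cast (R := ℝ)) (KI N t m (m+2) (by omega) (by omega))
  have K1 : ((N - (m+1)).descFactorial t : ℝ) * (N.choose (m+1) : ℝ)
      = (N.descFactorial t : ℝ) * ((m+2).choose (m+1) : ℝ) := by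
    exact_mod_cast congrArg (Nat.cast (R := ℝ)) (KI N t (m+1) (m+2) (by omega) (by omega))
  have K2 : ((N - (m+2)).descFactorial t : ℝ) * (N.choose (m+2) : ℝ)
      = (N.descFactorial t : ℝ) * ((m+2).choose (m+2) : ℝ) := by
    exact_mod_cast congrArg (Nat.cast (R := ℝ)) (KI N t (m+2) (m+2) (by omega) (by omega))
  have htop := newton_top V m hcV
  have hd0 := hdpos m (by omega)
  have hd1 := hdpos (m+1) (by omega)
  have hd2 := hdpos (m+2) (by omega)
  have hch2 : ((m+2).choose (m+2) : ℝ) = 1 := by rw [Nat.choose_self]; norm_num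
  have K2' : ((N - (m+2)).descFactorial t : ℝ) * (N.choose (m+2) : ℝ)
      = (N.descFactorial t : ℝ) := by rw [K2, hch2, mul_one]
  have e1 : ((N.descFactorial t : ℝ) * V.esymm m) * ((N.descFactorial t : ℝ) * V.esymm (m+2))
      = (((N - m).descFactorial t : ℝ) * S.esymm m)
        * (((N - (m+2)).descFactorial t : ℝ) * S.esymm (m+2)) := by rw [k0, k2]
  have F1 : ((N.choose (m+1) : ℝ)^2 * (S.esymm m * S.esymm (m+2)))
        * (((N - m).descFactorial t : ℝ) * ((N - (m+1)).descFactorial t : ℝ)^2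
            * ((N - (m+2)).descFactorial t : ℝ))
      = (N.descFactorial t : ℝ)^4 * (((m+2).choose (m+1) : ℝ)^2
          * (V.esymm m * V.esymm (m+2))) := by
    calc ((N.choose (m+1) : ℝ)^2 * (S.esymm m * S.esymm (m+2)))
        * (((N - m).descFactorial t : ℝ) * ((N - (m+1)).descFactorial t : ℝ)^2
            * ((N - (m+2)).descFactorial t : ℝ))
        = (((N - (m+1)).descFactorial t : ℝ) * (N.choose (m+1) : ℝ))^2
            * ((((N - m).descFactorial t : ℝ) * S.esymm m)
              * (((N - (m+2)).descFactorial t : ℝ) * S.esymm (m+2))) := by ring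
      _ = ((N.descFactorial t : ℝ) * ((m+2).choose (m+1) : ℝ))^2
            * (((N.descFactorial t : ℝ) * V.esymm m)
              * ((N.descFactorial t : ℝ) * V.esymm (m+2))) := by rw [K1, ← e1]
      _ = (N.descFactorial t : ℝ)^4 * (((m+2).choose (m+1) : ℝ)^2
            * (V.esymm m * V.esymm (m+2))) := by ring
  have F2 : (((N.choose m : ℝ) * (N.choose (m+2) : ℝ)) * S.esymm (m+1) ^ 2)
        * (((N - m).descFactorial t : ℝ) * ((N - (m+1)).descFactorial t : ℝ)^2
            * ((N - (m+2)).descFactorial t : ℝ))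
      = (N.descFactorial t : ℝ)^4 * (((m+2).choose m : ℝ) * V.esymm (m+1)^2) := by
    calc (((N.choose m : ℝ) * (N.choose (m+2) : ℝ)) * S.esymm (m+1) ^ 2)
        * (((N - m).descFactorial t : ℝ) * ((N - (m+1)).descFactorial t : ℝ)^2
            * ((N - (m+2)).descFactorial t : ℝ))
        = ((((N - m).descFactorial t : ℝ) * (N.choose m : ℝ))
            * (((N - (m+2)).descFactorial t : ℝ) * (N.choose (m+2) : ℝ)))
            * (((N - (m+1)).descFactorial t : ℝ) * S.esymm (m+1))^2 := by ring
      _ = (((N.descFactorial t : ℝ) * ((m+2).choose m : ℝ)) * (N.descFactorial t : ℝ))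
            * (((N.descFactorial t : ℝ) * V.esymm (m+1)))^2 := by rw [K0, K2', ← k1]
      _ = (N.descFactorial t : ℝ)^4 * (((m+2).choose m : ℝ) * V.esymm (m+1)^2) := by ring
  have H : ((N.choose (m+1) : ℝ)^2 * (S.esymm m * S.esymm (m+2)))
        * (((N - m).descFactorial t : ℝ) * ((N - (m+1)).descFactorial t : ℝ)^2
            * ((N - (m+2)).descFactorial t : ℝ))
      ≤ (((N.choose m : ℝ) * (N.choose (m+2) : ℝ)) * S.esymm (m+1) ^ 2)
        * (((N - m).descFactorial t : ℝ) * ((N - (m+1)).descFactorial t : ℝ)^2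
            * ((N - (m+2)).descFactorial t : ℝ)) := by
    rw [F1, F2]
    exact mul_le_mul_of_nonneg_left htop (by positivity)
  have hpos : (0:ℝ) < ((N - m).descFactorial t : ℝ) * ((N - (m+1)).descFactorial t : ℝ)^2
      * ((N - (m+2)).descFactorial t : ℝ) := by positivity
  exact le_of_mul_le_mul_right H hpos

open Finset


variable {n : ℕ}

noncomputable def Ef (x : Fin n → ℝ) (A : Finset (Fin n)) (m : ℕ) : ℝ :=
  ∑ s ∈ A.powersetCard m, ∏ j ∈ s, x j

lemma Ef_eq_esymm (x : Fin n → ℝ) (A : Finset (Fin n)) (m : ℕ) :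
    Ef x A m = (A.val.map x).esymm m := by
  rw [Finset.esymm_map_val x A m]
  rfl

lemma Ef_zero (x : Fin n → ℝ) (A : Finset (Fin n)) : Ef x A 0 = 1 := by
  simp [Ef, Finset.powersetCard_zero]

lemma Ef_eq_zero (x : Fin n → ℝ) (A : Finset (Fin n)) (m : ℕ) (h : A.card < m) :
    Ef x A m = 0 := by
  rw [Ef_eq_esymm]
  exact esymm_eq_zero _ _ (by simpa using h)

lemma Ef_recur (x : Fin n → ℝ) (A : Finset (Fin n)) (i : Fin n) (hi : i ∈ A) (m : ℕ) :
    Ef x A (m+1) = Ef x (A.erase i) (m+1) + x i * Ef x (A.erase i) m := by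
  have hval : A.val.map x = x i ::ₘ ((A.erase i).val.map x) := by
    rw [Finset.erase_val, ← Multiset.map_cons, Multiset.cons_erase hi]
  rw [Ef_eq_esymm, hval, esymm_cons, ← Ef_eq_esymm, ← Ef_eq_esymm]

lemma Ef_newton (x : Fin n → ℝ) (A : Finset (Fin n)) (m : ℕ) (h : m + 2 ≤ A.card) :
    ((A.card).choose (m+1) : ℝ)^2 * (Ef x A m * Ef x A (m+2)) ≤
      ((A.card).choose m * (A.card).choose (m+2) : ℝ) * Ef x A (m+1) ^ 2 := by
  have hc : Multiset.card (A.val.map x) = A.card := by simp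
  have := newton (A.val.map x) m (by rwa [hc])
  rw [hc] at this
  simpa [Ef_eq_esymm] using this

lemma choose_log_concave (N m : ℕ) :
    N.choose m * N.choose (m+2) ≤ N.choose (m+1) ^ 2 := by
  rcases Nat.lt_or_ge N (m+2) with h | h
  · rw [Nat.choose_eq_zero_of_lt h, Nat.mul_zero]
    exact Nat.zero_le _
  · have e1 : N.choose (m+2) * (m+2) = N.choose (m+1) * (N - (m+1)) :=
      Nat.choose_succ_right_eq N (m+1)
    have e2 : N.choose (m+1) * (m+1) = N.choose m * (N - m) :=
      Nat.choose_succ_right_eq N m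
    have h3 : (m+1) * (N - (m+1)) ≤ (m+2) * (N - m) :=
      Nat.mul_le_mul (by omega) (by omega)
    have hpos : 0 < (m+2) * (N - m) := by
      have : 0 < N - m := by omega
      positivity
    apply Nat.le_of_mul_le_mul_right _ hpos
    calc N.choose m * N.choose (m+2) * ((m+2) * (N - m))
        = (N.choose m * (N - m)) * (N.choose (m+2) * (m+2)) := by ring
      _ = (N.choose (m+1) * (m+1)) * (N.choose (m+1) * (N - (m+1))) := by rw [← e2, e1]
      _ = N.choose (m+1) ^ 2 * ((m+1) * (N - (m+1))) := by ring
      _ ≤ N.choose (m+1) ^ 2 * ((m+2) * (N - m)) := Nat.mul_le_mul_left _ h3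

lemma gammaShrink (x : Fin n → ℝ) : ∀ k : ℕ, ∀ A : Finset (Fin n), ∀ i ∈ A,
    (∀ m, 1 ≤ m → m ≤ k → 0 < Ef x A m) →
    ∀ m, 1 ≤ m → m + 1 ≤ k → 0 < Ef x (A.erase i) m := by
  intro k
  induction k using Nat.strong_induction_on with
  | _ k IH =>
    intro A i hi hA m hm1 hmk
    have hBsmall : ∀ j, 1 ≤ j → j + 1 ≤ m → 0 < Ef x (A.erase i) j := fun j hj1 hjm =>
      IH m (by omega) A i hi (fun l hl1 hlm => hA l hl1 (by omega)) j hj1 (by omega)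
    obtain ⟨m', rfl⟩ : ∃ m', m = m' + 1 := ⟨m - 1, by omega⟩
    have ham' : 0 < Ef x (A.erase i) m' := by
      rcases Nat.eq_zero_or_pos m' with rfl | hm'
      · rw [Ef_zero]; norm_num
      · exact hBsmall m' hm' (by omega)
    by_contra hneg
    push_neg at hneg
    have h1 : Ef x A (m'+1) = Ef x (A.erase i) (m'+1) + x i * Ef x (A.erase i) m' :=
      Ef_recur x A i hi m'
    have h2 : Ef x A (m'+2) = Ef x (A.erase i) (m'+2) + x i * Ef x (A.erase i) (m'+1) :=
      Ef_recur x A i hi (m'+1)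
    have hp1 : 0 < Ef x A (m'+1) := hA _ (by omega) (by omega)
    have hp2 : 0 < Ef x A (m'+2) := hA _ (by omega) (by omega)
    have q1 : 0 < x i * Ef x (A.erase i) m' + Ef x (A.erase i) (m'+1) := by linarith
    have q2 : 0 < Ef x (A.erase i) (m'+2) + x i * Ef x (A.erase i) (m'+1) := by linarith
    have key : Ef x (A.erase i) m' * Ef x (A.erase i) (m'+2) > Ef x (A.erase i) (m'+1)^2 := by
      nlinarith [q1, q2, ham', hneg]
    have hcard : m' + 2 ≤ (A.erase i).card := by
      by_contra hc
      push_neg at hc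
      have hz : Ef x (A.erase i) (m'+2) = 0 := Ef_eq_zero x _ _ (by omega)
      nlinarith [key, sq_nonneg (Ef x (A.erase i) (m'+1))]
    have newt := Ef_newton x (A.erase i) m' hcard
    have hcc : ((A.erase i).card.choose m' * (A.erase i).card.choose (m'+2) : ℝ) ≤
        ((A.erase i).card.choose (m'+1) : ℝ)^2 := by
      exact_mod_cast choose_log_concave (A.erase i).card m'
    have hchpos : (0:ℝ) < ((A.erase i).card.choose (m'+1) : ℝ)^2 := by
      have : 0 < (A.erase i).card.choose (m'+1) := Nat.choose_pos (by omega)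
      positivity
    nlinarith [newt, hcc, key, hchpos, sq_nonneg (Ef x (A.erase i) (m'+1)),
      mul_lt_mul_of_pos_left key hchpos,
      mul_le_mul_of_nonneg_right hcc (sq_nonneg (Ef x (A.erase i) (m'+1)))]

end MyNewton

open MyNewton in
/-- For `1 ≤ k ≤ n` and `λ ∈ Γ_k` ordered decreasingly `λ_1 ≥ ⋯ ≥ λ_n`,
one has `σ_{k−1}(λ|1) ≤ σ_{k−1}(λ|2) ≤ ⋯ ≤ σ_{k−1}(λ|n)`. -/
theorem statement_9 (n k : ℕ) (hk1 : 1 ≤ k) (hkn : k ≤ n)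
    (lam : Fin n → ℝ) (hlam : lam ∈ GammaCone n k)
    (hsort : ∀ i j : Fin n, i ≤ j → lam j ≤ lam i) :
    ∀ i j : Fin n, i ≤ j →
      esymmRemoved n (k - 1) i lam ≤ esymmRemoved n (k - 1) j lam := by
  intro i j hij
  rcases eq_or_lt_of_le hij with rfl | hlt
  · exact le_refl _
  have hne : i ≠ j := ne_of_lt hlt
  have hji : lam j ≤ lam i := hsort i j hij
  have hEpos : ∀ m, 1 ≤ m → m ≤ k → 0 < Ef lam Finset.univ m := fun m h1 h2 => hlam m h1 h2
  have eri : ∀ (i' : Fin n) (m : ℕ), esymmRemoved n m i' lam = Ef lam (Finset.univ.erase i') m :=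
    fun _ _ => rfl
  rcases Nat.lt_or_ge k 2 with hk2 | hk2
  · have hk0 : k - 1 = 0 := by omega
    rw [hk0, eri, eri, Ef_zero, Ef_zero]
  · obtain ⟨m', rfl⟩ : ∃ m', k = m' + 2 := ⟨k - 2, by omega⟩
    have hkm : m' + 2 - 1 = m' + 1 := by omega
    have hij_mem : j ∈ Finset.univ.erase i := Finset.mem_erase.2 ⟨hne.symm, Finset.mem_univ j⟩
    have hji_mem : i ∈ Finset.univ.erase j := Finset.mem_erase.2 ⟨hne, Finset.mem_univ i⟩
    have hcomm : (Finset.univ.erase j).erase i = (Finset.univ.erase i).erase j := by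
      ext a
      simp only [Finset.mem_erase, Finset.mem_univ, and_true]
      tauto
    have ri := Ef_recur lam (Finset.univ.erase i) j hij_mem m'
    have rj := Ef_recur lam (Finset.univ.erase j) i hji_mem m'
    have hD : 0 ≤ Ef lam ((Finset.univ.erase i).erase j) m' := by
      rcases Nat.eq_zero_or_pos m' with rfl | hm'
      · rw [Ef_zero]; norm_num
      · have hlev : ∀ l, 1 ≤ l → l ≤ m' + 1 → 0 < Ef lam (Finset.univ.erase i) l := fun l hl1 hl2 =>
          gammaShrink lam (m'+2) Finset.univ i (Finset.mem_univ i) hEpos l hl1 (by omega)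
        exact (gammaShrink lam (m'+1) (Finset.univ.erase i) j hij_mem hlev m' hm' le_rfl).le
    rw [hkm, eri, eri, ri, rj, hcomm]
    nlinarith [mul_le_mul_of_nonneg_right hji hD]
end

section
/- (Generalized Newton–MacLaurin inequality) Let λ ∈ Γ_k and n ≥ k > l ≥ 0, n ≥ r > s ≥ 0 with k ≥ r and l ≥ s. Then [ (σ_k(λ)/C_n^k) / (σ_l(λ)/C_n^l) ]^{1/(k−l)} ≤ [ (σ_r(λ)/C_n^r) / (σ_s(λ)/C_n^s) ]^{1/(r−s)}, where C_n^k = binom(n,k). -/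
open Finset MeasureTheory Metric Set Bornology Matrix

open Polynomial in
lemma my_splits_derivative {p : ℝ[X]} (hp : p.Splits) :
    (derivative p).Splits := by
  rcases eq_or_ne (derivative p) 0 with h0 | h0
  · rw [h0]; exact Splits.zero
  rcases eq_or_ne p 0 with hp0 | hp0
  · simp [hp0] at h0
  have hd : p.natDegree ≠ 0 := by
    intro h
    exact h0 (by rw [Polynomial.eq_C_of_natDegree_eq_zero h]; simp)
  rw [splits_iff_card_roots] at hp ⊢
  refine le_antisymm (card_roots' _) ?_
  have h1 := p.card_roots_le_derivative
  have h2 := p.natDegree_derivative_le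
  omega

open Polynomial in
lemma my_splits_reverse {p : ℝ[X]} (hp : p.Splits) :
    p.reverse.Splits := by
  rcases eq_or_ne p 0 with hp0 | hp0
  · rw [hp0, reverse_zero]; exact Splits.zero
  have key : ∀ s : Multiset ℝ, ((s.map fun a => X - C a).prod : ℝ[X]).reverse.Splits
      := by
    intro s
    induction s using Multiset.induction with
    | empty =>
        have : ((1 : ℝ[X])).reverse = 1 := by
          rw [show (1 : ℝ[X]) = C 1 by simp, reverse_C]
        simpa [this] using (Splits.C 1)
    | cons a t ih =>
        rw [Multiset.map_cons, Multiset.prod_cons, reverse_mul_of_domain]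
        exact Splits.mul (Splits.of_natDegree_le_one
          ((reverse_natDegree_le _).trans (by rw [natDegree_X_sub_C]))) ih
  have heq : p.reverse
      = (C p.leadingCoeff).reverse * ((p.roots.map fun a => X - C a).prod).reverse := by
    conv_lhs => rw [hp.eq_prod_roots]
    exact reverse_mul_of_domain _ _
  rw [heq]
  exact Splits.mul (Splits.of_natDegree_le_one (by simp [reverse_C]))
    (key _)


open Polynomial in
lemma my_splits_iterate {p : ℝ[X]} (hp : p.Splits) (m : ℕ) :
    (derivative^[m] p).Splits := by
  induction m with
  | zero => exact hp
  | succ d ih => rw [Function.iterate_succ_apply']; exact my_splits_derivative ih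

lemma dF1 (a : ℕ) : (a+1).descFactorial a = Nat.factorial (a+1) := by
  induction a with
  | zero => rfl
  | succ d ih =>
      rw [Nat.succ_descFactorial_succ, ih]
      exact (Nat.factorial_succ (d+1)).symm

lemma dF2 (a : ℕ) : 2 * ((a+2).descFactorial a) = Nat.factorial (a+2) := by
  induction a with
  | zero => rfl
  | succ d ih =>
      rw [Nat.succ_descFactorial_succ, Nat.factorial_succ, ← ih]; ring

open Polynomial in
lemma newton_core (a b n : ℕ) (hn : n = a + b + 2) (x : Fin n → ℝ) :
    esymm n a x * esymm n (a+2) x * ((n.choose (a+1) : ℝ))^2 ≤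
      esymm n (a+1) x ^ 2 * ((n.choose a : ℝ) * (n.choose (a+2) : ℝ)) := by
  by_cases hz : esymm n (a+2) x = 0
  · have h1 : (0:ℝ) ≤ esymm n (a+1) x ^ 2 * ((n.choose a : ℝ) * (n.choose (a+2) : ℝ)) := by
      positivity
    rw [hz]
    nlinarith [h1]
  set P : ℝ[X] := ∏ j : Fin n, (X + C (x j)) with hPdef
  have hPs : P.Splits :=
    Splits.prod (fun j _ => Splits.of_natDegree_le_one (le_of_eq (natDegree_X_add_C (x j))))
  have hPdeg : P.natDegree = n := by
    rw [hPdef, natDegree_prod _ _ (fun j _ => X_add_C_ne_zero (x j))]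
    simp [natDegree_X_add_C]
  have hPcoeff : ∀ m, m ≤ n → P.coeff m = esymm n (n - m) x := by
    intro m hm
    have hcard : (Finset.univ : Finset (Fin n)).card = n := by simp
    rw [hPdef, Finset.prod_X_add_C_coeff _ _ (by rw [hcard]; exact hm), hcard]
    rfl
  set Q := derivative^[b] P with hQdef
  have hQs : Q.Splits := my_splits_iterate hPs b
  have hQcoeff : ∀ j, Q.coeff j = ((j+b).descFactorial b : ℝ) * P.coeff (j + b) := by
    intro j
    rw [hQdef, Polynomial.coeff_iterate_derivative, nsmul_eq_mul]
  have hQtop : Q.coeff (a+2) = ((n.descFactorial b : ℕ) : ℝ) := by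
    rw [hQcoeff, hPcoeff (a+2+b) (by omega), show n - (a+2+b) = 0 by omega,
      show a+2+b = n by omega]
    simp [esymm]
  have hQdeg : Q.natDegree = a + 2 := by
    refine le_antisymm (le_trans (natDegree_iterate_derivative _ _) (by omega)) ?_
    refine le_natDegree_of_ne_zero ?_
    rw [hQtop]
    have := Nat.descFactorial_eq_zero_iff_lt (n := n) (k := b)
    simp only [ne_eq, Nat.cast_eq_zero]
    omega
  have hQ0 : Q.coeff 0 = ((b.descFactorial b : ℕ) : ℝ) * esymm n (a+2) x := by
    have h := hQcoeff 0
    rw [zero_add] at h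
    rw [h, hPcoeff b (by omega), show n - b = a+2 by omega]
  have hQ0ne : Q.coeff 0 ≠ 0 := by
    rw [hQ0]
    refine mul_ne_zero ?_ hz
    rw [Nat.descFactorial_self]
    exact_mod_cast Nat.cast_ne_zero.mpr (Nat.factorial_ne_zero b)
  set Rv := Q.reverse with hRvdef
  have hRvs : Rv.Splits := my_splits_reverse hQs
  have hRvdeg : Rv.natDegree = a + 2 := by
    rw [hRvdef, Polynomial.reverse_natDegree, hQdeg]
    have : Q.natTrailingDegree = 0 :=
      Polynomial.natTrailingDegree_eq_zero.mpr (Or.inr hQ0ne)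
    omega
  have hRvcoeff : ∀ j, j ≤ a + 2 → Rv.coeff j = Q.coeff (a+2-j) := by
    intro j hj
    rw [hRvdef, Polynomial.coeff_reverse, hQdeg, Polynomial.revAt_le hj]
  set R := derivative^[a] Rv with hRdef
  have hRs : R.Splits := my_splits_iterate hRvs a
  have hRcoeff : ∀ j, R.coeff j = ((j+a).descFactorial a : ℝ) * Rv.coeff (j+a) := by
    intro j
    rw [hRdef, Polynomial.coeff_iterate_derivative, nsmul_eq_mul]
  have hc2 : R.coeff 2 = (((a+2).descFactorial a : ℕ) : ℝ) * (((b.descFactorial b : ℕ) : ℝ) *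
      esymm n (a+2) x) := by
    rw [hRcoeff, hRvcoeff (2+a) (by omega), show a+2-(2+a) = 0 by omega, hQ0,
      show 2+a = a+2 by omega]
  have hc1 : R.coeff 1 = (((a+1).descFactorial a : ℕ) : ℝ) * ((((1+b).descFactorial b : ℕ) : ℝ) *
      esymm n (a+1) x) := by
    rw [hRcoeff, hRvcoeff (1+a) (by omega), show a+2-(1+a) = 1 by omega, hQcoeff,
      hPcoeff (1+b) (by omega), show n - (1+b) = a+1 by omega, show 1+a = a+1 by omega]
  have hc0 : R.coeff 0 = ((a.descFactorial a : ℕ) : ℝ) * ((((2+b).descFactorial b : ℕ) : ℝ) *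
      esymm n a x) := by
    rw [hRcoeff, hRvcoeff (0+a) (by omega), show a+2-(0+a) = 2 by omega, hQcoeff,
      hPcoeff (2+b) (by omega), show n - (2+b) = a by omega, show 0+a = a by omega]
  have hc2ne : R.coeff 2 ≠ 0 := by
    rw [hc2]
    refine mul_ne_zero ?_ (mul_ne_zero ?_ hz) <;>
      · simp only [ne_eq, Nat.cast_eq_zero]
        have h1 := Nat.descFactorial_eq_zero_iff_lt (n := a+2) (k := a)
        have h2 := Nat.descFactorial_eq_zero_iff_lt (n := b) (k := b)
        omega
  have hRne : R ≠ 0 := fun h => hc2ne (by rw [h]; simp)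
  have hRdeg : R.natDegree = 2 := by
    refine le_antisymm (le_trans (natDegree_iterate_derivative _ _) (by omega)) ?_
    exact le_natDegree_of_ne_zero hc2ne
  have hcard : Multiset.card R.roots = 2 := by
    rw [Polynomial.splits_iff_card_roots.mp hRs, hRdeg]
  obtain ⟨μ, hμ⟩ : ∃ μ, μ ∈ R.roots := by
    rw [← Multiset.card_pos_iff_exists_mem, hcard]; omega
  have hroot : R.eval μ = 0 := (Polynomial.mem_roots'.mp hμ).2
  have heval : R.coeff 0 + R.coeff 1 * μ + R.coeff 2 * μ^2 = 0 := by
    have h := Polynomial.eval_eq_sum_range (x := μ) (p := R)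
    rw [hRdeg, hroot] at h
    simp [Finset.sum_range_succ] at h
    linarith [h]
  have hmul : R.coeff 2 * (R.coeff 0 + R.coeff 1 * μ + R.coeff 2 * μ^2) = 0 := by
    rw [heval, mul_zero]
  have hdisc : 4 * (R.coeff 0 * R.coeff 2) ≤ (R.coeff 1)^2 := by
    nlinarith [sq_nonneg (2 * R.coeff 2 * μ + R.coeff 1), hmul]
  have f1 : (n.choose (a+1)) * Nat.factorial (a+1) * Nat.factorial (b+1) = Nat.factorial n := by
    have h := Nat.choose_mul_factorial_mul_factorial (n := n) (k := a+1) (by omega)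
    rwa [show n - (a+1) = b+1 by omega] at h
  have f2 : (n.choose a) * Nat.factorial a * Nat.factorial (b+2) = Nat.factorial n := by
    have h := Nat.choose_mul_factorial_mul_factorial (n := n) (k := a) (by omega)
    rwa [show n - a = b+2 by omega] at h
  have f3 : (n.choose (a+2)) * Nat.factorial (a+2) * Nat.factorial b = Nat.factorial n := by
    have h := Nat.choose_mul_factorial_mul_factorial (n := n) (k := a+2) (by omega)
    rwa [show n - (a+2) = b by omega] at h
  have c1 : ((n.choose (a+1) : ℝ)) * (Nat.factorial (a+1) : ℝ) * (Nat.factorial (b+1) : ℝ)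
      = (Nat.factorial n : ℝ) := by exact_mod_cast congrArg (Nat.cast (R := ℝ)) f1
  have c2 : ((n.choose a : ℝ)) * (Nat.factorial a : ℝ) * (Nat.factorial (b+2) : ℝ)
      = (Nat.factorial n : ℝ) := by exact_mod_cast congrArg (Nat.cast (R := ℝ)) f2
  have c3 : ((n.choose (a+2) : ℝ)) * (Nat.factorial (a+2) : ℝ) * (Nat.factorial b : ℝ)
      = (Nat.factorial n : ℝ) := by exact_mod_cast congrArg (Nat.cast (R := ℝ)) f3
  set F : ℝ := (Nat.factorial (a+1) : ℝ) * (Nat.factorial (b+1) : ℝ) with hF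
  set K : ℝ := (Nat.factorial a : ℝ) * (Nat.factorial b : ℝ) * (Nat.factorial (a+2) : ℝ) *
    (Nat.factorial (b+2) : ℝ) with hK
  have hid : ((n.choose (a+1) : ℝ))^2 * F^2 = ((n.choose a : ℝ) * (n.choose (a+2) : ℝ)) * K :=
    calc ((n.choose (a+1) : ℝ))^2 * F^2
        = (((n.choose (a+1) : ℝ)) * (Nat.factorial (a+1) : ℝ) * (Nat.factorial (b+1) : ℝ))^2 := by
          rw [hF]; ring
      _ = (Nat.factorial n : ℝ) * (Nat.factorial n : ℝ) := by rw [c1]; ring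
      _ = (((n.choose a : ℝ)) * (Nat.factorial a : ℝ) * (Nat.factorial (b+2) : ℝ)) *
          (((n.choose (a+2) : ℝ)) * (Nat.factorial (a+2) : ℝ) * (Nat.factorial b : ℝ)) := by
          rw [c2, c3]
      _ = ((n.choose a : ℝ) * (n.choose (a+2) : ℝ)) * K := by rw [hK]; ring
  have hE1 : (((a+1).descFactorial a : ℕ) : ℝ) = (Nat.factorial (a+1) : ℝ) := by
    exact_mod_cast congrArg (Nat.cast (R := ℝ)) (dF1 a)
  have hD1 : (((1+b).descFactorial b : ℕ) : ℝ) = (Nat.factorial (b+1) : ℝ) := by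
    rw [show 1+b = b+1 by omega]; exact_mod_cast congrArg (Nat.cast (R := ℝ)) (dF1 b)
  have hE0 : ((a.descFactorial a : ℕ) : ℝ) = (Nat.factorial a : ℝ) := by
    exact_mod_cast congrArg (Nat.cast (R := ℝ)) (Nat.descFactorial_self a)
  have hD0 : ((b.descFactorial b : ℕ) : ℝ) = (Nat.factorial b : ℝ) := by
    exact_mod_cast congrArg (Nat.cast (R := ℝ)) (Nat.descFactorial_self b)
  have hE2 : 2 * (((a+2).descFactorial a : ℕ) : ℝ) = (Nat.factorial (a+2) : ℝ) := by
    exact_mod_cast congrArg (Nat.cast (R := ℝ)) (dF2 a)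
  have hD2 : 2 * (((2+b).descFactorial b : ℕ) : ℝ) = (Nat.factorial (b+2) : ℝ) := by
    rw [show 2+b = b+2 by omega]; exact_mod_cast congrArg (Nat.cast (R := ℝ)) (dF2 b)
  rw [hc0, hc1, hc2, hE1, hD1, hE0, hD0] at hdisc
  set σ0 := esymm n a x
  set σ1 := esymm n (a+1) x
  set σ2 := esymm n (a+2) x
  have hFpos : 0 < F := by rw [hF]; positivity
  have hKeq : K = 4 * ((Nat.factorial a : ℝ) * (Nat.factorial b : ℝ) *
      (((a+2).descFactorial a : ℕ) : ℝ) * (((2+b).descFactorial b : ℕ) : ℝ)) := by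
    rw [hK, ← hE2, ← hD2]; ring
  have hdisc' : K * (σ0 * σ2) ≤ F^2 * σ1^2 := by
    rw [hKeq, hF]
    calc 4 * ((Nat.factorial a : ℝ) * (Nat.factorial b : ℝ) *
          (((a+2).descFactorial a : ℕ) : ℝ) * (((2+b).descFactorial b : ℕ) : ℝ)) * (σ0 * σ2)
        = 4 * (((Nat.factorial a : ℝ) * ((((2+b).descFactorial b : ℕ) : ℝ) * σ0)) *
          ((((a+2).descFactorial a : ℕ) : ℝ) * ((Nat.factorial b : ℝ) * σ2))) := by ring
      _ ≤ ((Nat.factorial (a+1) : ℝ) * ((Nat.factorial (b+1) : ℝ) * σ1))^2 := hdisc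
      _ = ((Nat.factorial (a+1) : ℝ) * (Nat.factorial (b+1) : ℝ))^2 * σ1^2 := by ring
  have hCN : (0:ℝ) ≤ (n.choose a : ℝ) * (n.choose (a+2) : ℝ) := by positivity
  have h5 : ((n.choose a : ℝ) * (n.choose (a+2) : ℝ)) * (K * (σ0 * σ2)) ≤
      ((n.choose a : ℝ) * (n.choose (a+2) : ℝ)) * (F^2 * σ1^2) :=
    mul_le_mul_of_nonneg_left hdisc' hCN
  have hF2 : (0:ℝ) < F^2 := by positivity
  rw [← mul_le_mul_iff_of_pos_right hF2]
  calc σ0 * σ2 * ((n.choose (a+1) : ℝ))^2 * F^2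
      = ((n.choose a : ℝ) * (n.choose (a+2) : ℝ)) * (K * (σ0 * σ2)) := by
        linear_combination (σ0 * σ2) * hid
    _ ≤ ((n.choose a : ℝ) * (n.choose (a+2) : ℝ)) * (F^2 * σ1^2) := h5
    _ = σ1 ^ 2 * ((n.choose a : ℝ) * (n.choose (a+2) : ℝ)) * F^2 := by ring
lemma mono_of_consec (a : ℕ → ℝ) (k : ℕ) (h : ∀ i, i + 2 ≤ k → a (i+1) ≤ a i) :
    ∀ i j, i ≤ j → j + 1 ≤ k → a j ≤ a i := by
  intro i j hij
  induction j, hij using Nat.le_induction with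
  | base => intro _; exact le_refl _
  | succ j hij ih =>
      intro hjk
      exact le_trans (h j (by omega)) (ih (by omega))

lemma sum_left (a : ℕ → ℝ) (s r k : ℕ) (hsr : s < r) (hrk : r ≤ k)
    (hmono : ∀ i j, i ≤ j → j + 1 ≤ k → a j ≤ a i) :
    ∀ m, r ≤ m → m ≤ k →
      ((r:ℝ) - (s:ℝ)) * ∑ i ∈ Finset.Ico s m, a i ≤
        ((m:ℝ) - (s:ℝ)) * ∑ i ∈ Finset.Ico s r, a i := by
  intro m hrm
  induction m, hrm using Nat.le_induction with
  | base => intro _; exact le_refl _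
  | succ m hrm ih =>
      intro hmk
      have ih' := ih (by omega)
      rw [Finset.sum_Ico_succ_top (by omega : s ≤ m)]
      have hbound : ((r:ℝ) - (s:ℝ)) * a m ≤ ∑ i ∈ Finset.Ico s r, a i := by
        have hc : (Finset.Ico s r).card = r - s := Nat.card_Ico s r
        have := Finset.card_nsmul_le_sum (Finset.Ico s r) a (a m)
          (fun i hi => hmono i m (by have := Finset.mem_Ico.mp hi; omega) (by omega))
        rw [hc, nsmul_eq_mul] at this
        have hcast : ((r - s : ℕ) : ℝ) = (r:ℝ) - (s:ℝ) := by
          have : s ≤ r := le_of_lt hsr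
          push_cast [this]; ring
        rw [hcast] at this
        exact this
      have hm1 : ((m+1 : ℕ) : ℝ) = (m:ℝ) + 1 := by push_cast; ring
      rw [hm1]
      nlinarith [ih', hbound]

lemma sum_right (a : ℕ → ℝ) (l k : ℕ) (hlk : l < k)
    (hmono : ∀ i j, i ≤ j → j + 1 ≤ k → a j ≤ a i) :
    ∀ d, d ≤ l →
      ((k:ℝ) - ((l - d : ℕ):ℝ)) * ∑ i ∈ Finset.Ico l k, a i ≤
        ((k:ℝ) - (l:ℝ)) * ∑ i ∈ Finset.Ico (l - d) k, a i := by
  intro d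
  induction d with
  | zero => intro _; simp
  | succ d ih =>
      intro hd
      have ih' := ih (by omega)
      set m := l - (d+1) with hm
      have hm1 : l - d = m + 1 := by omega
      rw [hm1] at ih'
      have hmk : m < k := by omega
      rw [Finset.sum_eq_sum_Ico_succ_bot hmk]
      have hbound : ∑ i ∈ Finset.Ico l k, a i ≤ ((k:ℝ) - (l:ℝ)) * a m := by
        have hc : (Finset.Ico l k).card = k - l := Nat.card_Ico l k
        have := Finset.sum_le_card_nsmul (Finset.Ico l k) a (a m)
          (fun i hi => hmono m i (by have := Finset.mem_Ico.mp hi; omega)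
            (by have := Finset.mem_Ico.mp hi; omega))
        rw [hc, nsmul_eq_mul] at this
        have hcast : ((k - l : ℕ) : ℝ) = (k:ℝ) - (l:ℝ) := by
          have : l ≤ k := le_of_lt hlk
          push_cast [this]; ring
        rw [hcast] at this
        exact this
      have hmc : ((m + 1 : ℕ) : ℝ) = (m:ℝ) + 1 := by push_cast; ring
      rw [hmc] at ih'
      nlinarith [ih', hbound]

lemma sum_avg (a : ℕ → ℝ) (s l r k : ℕ) (hsl : s ≤ l) (hlk : l < k) (hsr : s < r) (hrk : r ≤ k)
    (hmono : ∀ i j, i ≤ j → j + 1 ≤ k → a j ≤ a i) :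
    ((r:ℝ) - (s:ℝ)) * ∑ i ∈ Finset.Ico l k, a i ≤
      ((k:ℝ) - (l:ℝ)) * ∑ i ∈ Finset.Ico s r, a i := by
  have H1 := sum_right a l k hlk hmono (l - s) (by omega)
  rw [show l - (l - s) = s by omega] at H1
  have H2 := sum_left a s r k hsr hrk hmono k (by omega) (le_refl k)
  have hks : (0:ℝ) < (k:ℝ) - (s:ℝ) := by
    have : s < k := by omega
    have := (Nat.cast_lt (α := ℝ)).mpr this
    linarith
  have hrs : (0:ℝ) ≤ (r:ℝ) - (s:ℝ) := by
    have := (Nat.cast_lt (α := ℝ)).mpr hsr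
    linarith
  have hkl : (0:ℝ) ≤ (k:ℝ) - (l:ℝ) := by
    have := (Nat.cast_lt (α := ℝ)).mpr hlk
    linarith
  have hcast : ((l - (l - s) : ℕ) : ℝ) = (s:ℝ) := by rw [show l - (l - s) = s by omega]
  have p1 := mul_le_mul_of_nonneg_left H1 hrs
  have p2 := mul_le_mul_of_nonneg_left H2 hkl
  have h3 : ((k:ℝ) - (s:ℝ)) * (((r:ℝ) - (s:ℝ)) * ∑ i ∈ Finset.Ico l k, a i) ≤
      ((k:ℝ) - (s:ℝ)) * (((k:ℝ) - (l:ℝ)) * ∑ i ∈ Finset.Ico s r, a i) := by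
    nlinarith [p1, p2]
  exact le_of_mul_le_mul_left h3 hks

lemma maclaurin_final (p : ℕ → ℝ) (k l r s : ℕ) (hlk : l < k) (hsr : s < r) (hrk : r ≤ k)
    (hsl : s ≤ l) (hp : ∀ i, i ≤ k → 0 < p i)
    (hq : ∀ i, i + 2 ≤ k → p i * p (i+2) ≤ p (i+1)^2) :
    (p k / p l) ^ ((1 : ℝ) / ((k : ℝ) - (l : ℝ))) ≤
      (p r / p s) ^ ((1 : ℝ) / ((r : ℝ) - (s : ℝ))) := by
  set A : ℕ → ℝ := fun i => Real.log (p (i+1)) - Real.log (p i) with hA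
  have consec : ∀ i, i + 2 ≤ k → A (i+1) ≤ A i := by
    intro i hi
    have h0 := hp i (by omega)
    have h1 := hp (i+1) (by omega)
    have h2 := hp (i+2) (by omega)
    have hlog : Real.log (p i * p (i+2)) ≤ Real.log (p (i+1)^2) :=
      Real.log_le_log (by positivity) (hq i hi)
    rw [Real.log_mul (ne_of_gt h0) (ne_of_gt h2), Real.log_pow] at hlog
    simp only [hA]
    push_cast at hlog
    have : (i + 1) + 1 = i + 2 := by omega
    rw [this]
    linarith
  have hmono := mono_of_consec A k consec
  have tel : ∀ u v : ℕ, u ≤ v → ∑ i ∈ Finset.Ico u v, A i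
      = Real.log (p v) - Real.log (p u) := by
    intro u v huv
    rw [Finset.sum_Ico_eq_sub _ huv]
    have h1 := Finset.sum_range_sub (fun i => Real.log (p i)) v
    have h2 := Finset.sum_range_sub (fun i => Real.log (p i)) u
    simp only [hA]
    rw [h1, h2]
    ring
  have key := sum_avg A s l r k hsl hlk hsr hrk hmono
  rw [tel l k (le_of_lt hlk), tel s r (le_of_lt hsr)] at key
  have hpk := hp k (le_refl k)
  have hpl := hp l (by omega)
  have hpr := hp r (by omega)
  have hps := hp s (by omega)
  have hbkl : 0 < p k / p l := by positivity
  have hbrs : 0 < p r / p s := by positivity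
  rw [Real.rpow_def_of_pos hbkl, Real.rpow_def_of_pos hbrs]
  apply Real.exp_le_exp.mpr
  rw [Real.log_div (ne_of_gt hpk) (ne_of_gt hpl), Real.log_div (ne_of_gt hpr) (ne_of_gt hps)]
  have hkl : (0:ℝ) < (k:ℝ) - (l:ℝ) := by
    have := (Nat.cast_lt (α := ℝ)).mpr hlk; linarith
  have hrs : (0:ℝ) < (r:ℝ) - (s:ℝ) := by
    have := (Nat.cast_lt (α := ℝ)).mpr hsr; linarith
  rw [mul_one_div, mul_one_div, div_le_div_iff₀ hkl hrs]
  linarith [key]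

/-- Generalized Newton–MacLaurin inequality: for `λ ∈ Γ_k`,
`n ≥ k > l ≥ 0`, `n ≥ r > s ≥ 0`, `k ≥ r`, `l ≥ s`,
`[(σ_k/C_n^k)/(σ_l/C_n^l)]^{1/(k−l)} ≤ [(σ_r/C_n^r)/(σ_s/C_n^s)]^{1/(r−s)}`. -/
theorem statement_10 (n k l r s : ℕ) (hlk : l < k) (hkn : k ≤ n)
    (hsr : s < r) (hrn : r ≤ n) (hrk : r ≤ k) (hsl : s ≤ l)
    (lam : Fin n → ℝ) (hlam : lam ∈ GammaCone n k) :
    ((esymm n k lam / (n.choose k : ℝ)) / (esymm n l lam / (n.choose l : ℝ)))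
        ^ ((1 : ℝ) / ((k : ℝ) - (l : ℝ))) ≤
      ((esymm n r lam / (n.choose r : ℝ)) / (esymm n s lam / (n.choose s : ℝ)))
        ^ ((1 : ℝ) / ((r : ℝ) - (s : ℝ))) := by
  have hp : ∀ i, i ≤ k → 0 < esymm n i lam / (n.choose i : ℝ) := by
    intro i hik
    rcases Nat.eq_zero_or_pos i with h0 | h1
    · rw [h0]
      have h1 : esymm n 0 lam = 1 := by simp [esymm]
      rw [h1]
      simp
    · have hnum := hlam i h1 hik
      have hden : 0 < (n.choose i : ℝ) := by
        exact_mod_cast Nat.choose_pos (le_trans hik hkn)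
      positivity
  have hq : ∀ i, i + 2 ≤ k →
      esymm n i lam / (n.choose i : ℝ) * (esymm n (i+2) lam / (n.choose (i+2) : ℝ)) ≤
        (esymm n (i+1) lam / (n.choose (i+1) : ℝ))^2 := by
    intro i hi
    have hnc := newton_core i (n - i - 2) n (by omega) lam
    have hd1 : (0:ℝ) < (n.choose i : ℝ) * (n.choose (i+2) : ℝ) := by
      have c1 : 0 < n.choose i := Nat.choose_pos (by omega)
      have c2 : 0 < n.choose (i+2) := Nat.choose_pos (by omega)
      positivity
    have hd2 : (0:ℝ) < ((n.choose (i+1) : ℝ))^2 := by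
      have c1 : 0 < n.choose (i+1) := Nat.choose_pos (by omega)
      positivity
    rw [div_mul_div_comm, div_pow, div_le_div_iff₀ hd1 hd2]
    linarith [hnc]
  exact maclaurin_final (fun i => esymm n i lam / (n.choose i : ℝ)) k l r s hlk hsr hrk hsl hp hq
end

section
/- Let 0 ≤ l < k ≤ n and λ = (λ_1,…,λ_n) ∈ Γ̃_k with λ_1 ≥ λ_2 ≥ ⋯ ≥ λ_n, and set η = (η_1,…,η_n) with η_i = Σ_{j≠i} λ_j. Then the derivatives of σ_k(η)/σ_l(η) with respect to the η-variables are nonincreasing in the index: ∂[σ_k(η)/σ_l(η)]/∂η_1 ≥ ∂[σ_k(η)/σ_l(η)]/∂η_2 ≥ ⋯ ≥ ∂[σ_k(η)/σ_l(η)]/∂η_n, whereas the derivatives with respect to the λ-variables are nondecreasing: ∂[σ_k(η)/σ_l(η)]/∂λ_1 ≤ ∂[σ_k(η)/σ_l(η)]/∂λ_2 ≤ ⋯ ≤ ∂[σ_k(η)/σ_l(η)]/∂λ_n. -/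
open Finset MeasureTheory Metric Set Bornology Matrix

open Multiset Polynomial

namespace StmtAux

lemma esymm_zero' (s : Multiset ℝ) : s.esymm 0 = 1 := by
  simp [Multiset.esymm, Multiset.powersetCard_zero_left]

lemma esymm_cons (a : ℝ) (s : Multiset ℝ) (m : ℕ) :
    (a ::ₘ s).esymm (m+1) = a * s.esymm m + s.esymm (m+1) := by
  rw [Multiset.esymm, Multiset.powersetCard_cons, Multiset.map_add, Multiset.sum_add,
    Multiset.map_map]
  have h2 : ((Multiset.powersetCard m s).map (Multiset.prod ∘ (a ::ₘ ·))).sum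
      = a * s.esymm m := by
    rw [Multiset.esymm, ← Multiset.sum_map_mul_left]
    exact congrArg Multiset.sum (Multiset.map_congr rfl fun t _ => by simp)
  rw [h2, ← Multiset.esymm, add_comm]

lemma esymm_one' (s : Multiset ℝ) : s.esymm 1 = s.sum := by
  simp [Multiset.esymm, Multiset.powersetCard_one, Multiset.map_map]

lemma esymm_of_card_lt {s : Multiset ℝ} {m : ℕ} (h : Multiset.card s < m) :
    s.esymm m = 0 := by
  obtain ⟨i, hi, rfl⟩ : ∃ i, 0 < i ∧ m = Multiset.card s + i :=
    ⟨m - Multiset.card s, by omega, by omega⟩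
  rw [Multiset.esymm, Multiset.powersetCard_card_add s hi]
  simp

lemma esymm_self (s : Multiset ℝ) : s.esymm (Multiset.card s) = s.prod := by
  induction s using Multiset.induction with
  | empty => simp [esymm_zero']
  | cons a s ih =>
    rw [Multiset.card_cons, esymm_cons, ih, esymm_of_card_lt (by simp), Multiset.prod_cons]
    ring

lemma ms_cs (y : Multiset ℝ) : y.sum ^ 2 ≤ (Multiset.card y : ℝ) * ((y.map (· ^ 2)).sum) := by
  induction y using Multiset.induction with
  | empty => simp
  | cons a y ih =>
    rw [Multiset.sum_cons, Multiset.card_cons, Multiset.map_cons, Multiset.sum_cons]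
    push_cast
    rcases Nat.eq_zero_or_pos (Multiset.card y) with h | h
    · obtain rfl : y = 0 := Multiset.card_eq_zero.mp h
      simp
    · have hc : (1 : ℝ) ≤ (Multiset.card y : ℝ) := by exact_mod_cast h
      nlinarith [sq_nonneg ((Multiset.card y : ℝ) * a - y.sum), ih,
        mul_le_mul_of_nonneg_left ih (by linarith : (0:ℝ) ≤ (Multiset.card y : ℝ))]

lemma sum_sq_eq (y : Multiset ℝ) :
    y.sum ^ 2 = (y.map (· ^ 2)).sum + 2 * y.esymm 2 := by
  induction y using Multiset.induction with
  | empty =>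
    simp [esymm_of_card_lt]
    exact esymm_of_card_lt (by simp)
  | cons a y ih =>
    rw [Multiset.sum_cons, Multiset.map_cons, Multiset.sum_cons,
      show (2:ℕ) = 1 + 1 from rfl, esymm_cons, esymm_one']
    ring_nf
    nlinarith [ih]

lemma esymm_inv (s : Multiset ℝ) (h0 : (0:ℝ) ∉ s) :
    ∀ j ≤ Multiset.card s, s.esymm j = s.prod * ((s.map (·⁻¹)).esymm (Multiset.card s - j)) := by
  induction s using Multiset.induction with
  | empty =>
    intro j hj
    have hj0 : j = 0 := by simpa using hj
    subst hj0
    simp [esymm_zero']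
  | cons a s ih =>
    intro j hj
    have ha : a ≠ 0 := fun h => h0 (h ▸ Multiset.mem_cons_self a s)
    have h0' : (0:ℝ) ∉ s := fun h => h0 (Multiset.mem_cons_of_mem h)
    have hP : s.prod ≠ 0 := Multiset.prod_ne_zero h0'
    simp only [Multiset.card_cons] at hj
    rw [Multiset.map_cons, Multiset.card_cons, Multiset.prod_cons]
    rcases j with _ | j'
    · rw [esymm_zero', Nat.sub_zero,
        show Multiset.card s + 1 = Multiset.card (a⁻¹ ::ₘ s.map (·⁻¹)) by simp,
        esymm_self, Multiset.prod_cons, Multiset.prod_map_inv]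
      field_simp
      rw [Multiset.map_id', div_self hP]
    · rcases Nat.lt_or_ge (Multiset.card s) (j' + 1) with hums | hums
      · have hj'' : j' = Multiset.card s := by omega
        subst hj''
        rw [Nat.sub_self, esymm_zero',
          show Multiset.card s + 1 = Multiset.card (a ::ₘ s) by simp,
          esymm_self, Multiset.prod_cons]
        ring
      · have hcs : Multiset.card s + 1 - (j' + 1) = (Multiset.card s - (j' + 1)) + 1 := by omega
        rw [esymm_cons, hcs, esymm_cons, ih h0' _ hums, ih h0' _ (by omega : j' ≤ Multiset.card s)]
        have hd : Multiset.card s - j' = Multiset.card s - (j' + 1) + 1 := by omega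
        rw [hd]
        field_simp
        ring

lemma newton_base (s : Multiset ℝ) (m : ℕ) (hcard : Multiset.card s = m + 2) :
    ((m + 2 : ℝ)) ^ 2 * (s.esymm m * s.esymm (m + 2))
      ≤ ((m + 2 : ℝ) * (m + 1) / 2) * (s.esymm (m + 1)) ^ 2 := by
  by_cases h0 : (0:ℝ) ∈ s
  · have hz : s.esymm (m + 2) = 0 := by
      rw [← hcard, esymm_self]
      exact Multiset.prod_eq_zero h0
    rw [hz]
    have hm1 : (0:ℝ) ≤ (m + 2 : ℝ) * (m + 1) / 2 := by positivity
    nlinarith [sq_nonneg (s.esymm (m+1))]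
  · set y := s.map (·⁻¹) with hy
    have hcy : Multiset.card y = m + 2 := by simp [hy, hcard]
    have e2 : s.esymm (m + 2) = s.prod := by rw [← hcard, esymm_self]
    have e1 : s.esymm (m + 1) = s.prod * y.esymm 1 := by
      have h := esymm_inv s h0 (m+1) (by omega)
      rwa [hcard, show m + 2 - (m+1) = 1 by omega] at h
    have e0 : s.esymm m = s.prod * y.esymm 2 := by
      have h := esymm_inv s h0 m (by omega)
      rwa [hcard, show m + 2 - m = 2 by omega] at h
    have hcs := ms_cs y
    have hsq := sum_sq_eq y
    rw [esymm_one'] at e1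
    rw [e0, e1, e2]
    set P := s.prod with hP
    set S := y.sum with hS
    set Q := (y.map (· ^ 2)).sum with hQ
    set E2 := y.esymm 2 with hE2
    rw [hcy] at hcs
    push_cast at hcs
    have hP2 : (0:ℝ) ≤ P ^ 2 := sq_nonneg _
    have hc2 : (0:ℝ) ≤ (m:ℝ) + 2 := by positivity
    have h4 : 0 ≤ P^2 * (((m:ℝ)+2) * Q - S^2) := mul_nonneg hP2 (by linarith)
    have h6b : ((m:ℝ)+2)^2 * (P^2*S^2)
        = ((m:ℝ)+2)^2 * (P^2*Q) + 2*(((m:ℝ)+2)^2 * (P^2*E2)) := by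
      have h5 : P^2*S^2 = P^2*Q + 2*(P^2*E2) := by rw [hsq]; ring
      rw [show ((m:ℝ)+2)^2 * (P^2*S^2) = ((m:ℝ)+2)^2 * (P^2*S^2) from rfl, h5]; ring
    have h7 : 0 ≤ ((m:ℝ)+2) * (P^2 * (((m:ℝ)+2) * Q - S^2)) := mul_nonneg hc2 h4
    nlinarith [h6b, h7]
lemma newton_aux : ∀ (N : ℕ) (s : Multiset ℝ), Multiset.card s = N → ∀ m : ℕ,
    ((N.choose (m+1) : ℝ))^2 * (s.esymm m * s.esymm (m+2))
      ≤ (N.choose m : ℝ) * (N.choose (m+2) : ℝ) * (s.esymm (m+1))^2 := by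
  intro N
  induction N using Nat.strong_induction_on with
  | _ N ih =>
    intro s hN m
    rcases lt_trichotomy N (m+2) with hlt | heq | hgt
    · rw [esymm_of_card_lt (show Multiset.card s < m + 2 by omega)]
      have h1 : (0:ℝ) ≤ (N.choose m : ℝ) * (N.choose (m+2) : ℝ) * (s.esymm (m+1))^2 := by
        positivity
      nlinarith [h1]
    · have hcard : Multiset.card s = m + 2 := by omega
      have hb := newton_base s m hcard
      have h1 : (N.choose (m+1) : ℝ) = (m + 2 : ℝ) := by
        subst heq; rw [Nat.choose_succ_self_right]; push_cast; ring
      have h2 : (N.choose (m+2) : ℝ) = 1 := by subst heq; rw [Nat.choose_self]; norm_num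
      have h3 : (N.choose m : ℝ) = (m + 2 : ℝ) * (m + 1) / 2 := by
        subst heq
        rw [show (m+2).choose m = (m+2).choose 2 by
          rw [← Nat.choose_symm (by omega : 2 ≤ m + 2)]; norm_num,
          Nat.cast_choose_two]
        push_cast; ring
      rw [h1, h2, h3]
      nlinarith [hb]
    · -- N ≥ m + 3 : polynomial derivative step
      have hN1 : 1 ≤ N := by omega
      set q : Polynomial ℝ := (s.map (fun a => Polynomial.X - Polynomial.C a)).prod with hq
      have hmonic : q.Monic :=
        Polynomial.monic_multiset_prod_of_monic _ _ (fun a _ => Polynomial.monic_X_sub_C a)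
      have hdeg : q.natDegree = N := by
        rw [hq, Polynomial.natDegree_multiset_prod_X_sub_C_eq_card, hN]
      have hroots : q.roots = s := by
        rw [hq, Polynomial.roots_multiset_prod_X_sub_C]
      set q' := Polynomial.derivative q with hq'
      have hdlt : q'.natDegree < N := hdeg ▸ Polynomial.natDegree_derivative_lt (by omega)
      have hcle : Multiset.card q.roots ≤ Multiset.card q'.roots + 1 :=
        q.card_roots_le_derivative
      rw [hroots, hN] at hcle
      have hcr' : Multiset.card q'.roots ≤ q'.natDegree := q'.card_roots'
      have hcard' : Multiset.card q'.roots = N - 1 := by omega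
      have hdeg' : q'.natDegree = N - 1 := by omega
      set t := q'.roots with ht
      have hLC' : q'.leadingCoeff = (N : ℝ) := by
        have hcN : q.coeff N = 1 := by rw [← hdeg]; exact hmonic.coeff_natDegree
        rw [Polynomial.leadingCoeff, hdeg', hq', Polynomial.coeff_derivative,
          show N - 1 + 1 = N from by omega, hcN, one_mul, Nat.cast_sub hN1]
        ring
      have hcoef : ∀ j, j ≤ N - 1 → (N:ℝ) * t.esymm j = ((N:ℝ) - j) * s.esymm j := by
        intro j hj
        have h1 := Polynomial.coeff_eq_esymm_roots_of_card
          (hcard'.trans hdeg'.symm) (show N - 1 - j ≤ q'.natDegree by omega)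
        rw [hdeg', hLC', show N - 1 - (N - 1 - j) = j from by omega, ← ht] at h1
        have hcq : Multiset.card q.roots = q.natDegree := by rw [hroots, hN, hdeg]
        have h2 := Polynomial.coeff_eq_esymm_roots_of_card hcq
          (show N - j ≤ q.natDegree by omega)
        rw [hdeg, hmonic.leadingCoeff, show N - (N - j) = j from by omega, hroots, one_mul] at h2
        have h3 : q'.coeff (N - 1 - j) = q.coeff (N - j) * ((N:ℝ) - j) := by
          rw [hq', Polynomial.coeff_derivative, show N - 1 - j + 1 = N - j from by omega,
            Nat.cast_sub (show j ≤ N - 1 by omega), Nat.cast_sub hN1]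
          push_cast
          ring_nf
        rw [h1, h2] at h3
        have hone : ((-1:ℝ)^j) * ((-1:ℝ)^j) = 1 := by
          rw [← pow_add, Even.neg_one_pow ⟨j, rfl⟩]
        calc (N:ℝ) * t.esymm j
            = ((-1:ℝ)^j * (-1)^j) * ((N:ℝ) * t.esymm j) := by rw [hone]; ring
          _ = (-1:ℝ)^j * ((N:ℝ) * (-1)^j * t.esymm j) := by ring
          _ = (-1:ℝ)^j * ((-1:ℝ)^j * s.esymm j * ((N:ℝ) - j)) := by rw [h3]
          _ = (((-1:ℝ)^j * (-1)^j)) * (s.esymm j * ((N:ℝ) - j)) := by ring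
          _ = ((N:ℝ) - j) * s.esymm j := by rw [hone]; ring
      have hchoose : ∀ j, j ≤ N → ((N-1).choose j : ℝ) * N = (N.choose j : ℝ) * ((N:ℝ) - j) := by
        intro j hj
        have h := Nat.choose_mul_succ_eq (N-1) j
        rw [show N - 1 + 1 = N from by omega] at h
        have hcast : ((N.choose j * (N - j) : ℕ) : ℝ) = (N.choose j : ℝ) * ((N:ℝ) - j) := by
          push_cast [Nat.cast_sub hj]; ring
        rw [← hcast, ← h]; push_cast; ring
      -- apply IH to t
      have hIH := ih (N-1) (by omega) t hcard' m
      -- abbreviations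
      set c0 := (N.choose m : ℝ); set c1 := (N.choose (m+1) : ℝ); set c2 := (N.choose (m+2) : ℝ)
      set d0 := ((N-1).choose m : ℝ); set d1 := ((N-1).choose (m+1) : ℝ)
      set d2 := ((N-1).choose (m+2) : ℝ)
      have e0 := hcoef m (by omega)
      have e1 := hcoef (m+1) (by omega)
      have e2 := hcoef (m+2) (by omega)
      have f0 := hchoose m (by omega)
      have f1 := hchoose (m+1) (by omega)
      have f2 := hchoose (m+2) (by omega)
      push_cast at e1 e2 f1 f2
      set K := ((N:ℝ) - m - 1)^2 * (((N:ℝ) - m) * ((N:ℝ) - m - 2)) with hK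
      have hKpos : 0 < K := by
        have h1 : (0:ℝ) < (N:ℝ) - m - 1 := by
          have : (m:ℝ) + 2 < (N:ℝ) := by exact_mod_cast hgt
          linarith
        have h2 : (0:ℝ) < (N:ℝ) - m := by linarith
        have h3 : (0:ℝ) < (N:ℝ) - m - 2 := by
          have : (m:ℝ) + 2 < (N:ℝ) := by exact_mod_cast hgt
          linarith
        positivity
      have hA : (N:ℝ)^4 * (d1^2 * (t.esymm m * t.esymm (m+2)))
          = K * (c1^2 * (s.esymm m * s.esymm (m+2))) := by
        have expand : (N:ℝ)^4 * (d1^2 * (t.esymm m * t.esymm (m+2)))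
            = (d1 * N)^2 * (((N:ℝ) * t.esymm m) * ((N:ℝ) * t.esymm (m+2))) := by ring
        rw [expand, f1, e0, e2, hK]
        ring
      have hB : (N:ℝ)^4 * (d0 * d2 * (t.esymm (m+1))^2)
          = K * (c0 * c2 * (s.esymm (m+1))^2) := by
        have expand : (N:ℝ)^4 * (d0 * d2 * (t.esymm (m+1))^2)
            = (d0 * N) * (d2 * N) * ((N:ℝ) * t.esymm (m+1))^2 := by ring
        rw [expand, f0, f2, e1, hK]
        ring
      have hN4 : (0:ℝ) ≤ (N:ℝ)^4 := by positivity
      have hmul := mul_le_mul_of_nonneg_left hIH hN4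
      rw [hA, hB] at hmul
      exact le_of_mul_le_mul_left hmul hKpos
lemma choose_log_concave {N m : ℕ} (h : m + 2 ≤ N) :
    N.choose m * N.choose (m+2) ≤ N.choose (m+1) * N.choose (m+1) := by
  have h1 : N.choose (m+1) * (m+1) = N.choose m * (N - m) := Nat.choose_succ_right_eq N m
  have h2 : N.choose (m+2) * (m+2) = N.choose (m+1) * (N - (m+1)) := Nat.choose_succ_right_eq N (m+1)
  have key : N.choose m * N.choose (m+2) * ((m+2) * (N-m))
      = N.choose (m+1) * N.choose (m+1) * ((m+1) * (N - (m+1))) := by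
    calc N.choose m * N.choose (m+2) * ((m+2) * (N-m))
        = (N.choose m * (N-m)) * (N.choose (m+2) * (m+2)) := by ring
      _ = (N.choose (m+1) * (m+1)) * (N.choose (m+1) * (N - (m+1))) := by rw [← h1, h2]
      _ = N.choose (m+1) * N.choose (m+1) * ((m+1) * (N - (m+1))) := by ring
  have hle : (m+1) * (N - (m+1)) ≤ (m+2) * (N-m) := by
    have : N - (m+1) ≤ N - m := by omega
    calc (m+1) * (N - (m+1)) ≤ (m+1) * (N - m) := Nat.mul_le_mul_left _ this
      _ ≤ (m+2) * (N-m) := Nat.mul_le_mul_right _ (by omega)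
  have hpos : 0 < (m+2) * (N-m) := by
    have : 0 < N - m := by omega
    positivity
  have : N.choose m * N.choose (m+2) * ((m+2) * (N-m))
      ≤ N.choose (m+1) * N.choose (m+1) * ((m+2) * (N-m)) := by
    rw [key]
    exact Nat.mul_le_mul_left _ hle
  exact Nat.le_of_mul_le_mul_right this hpos

lemma esymm_log_concave (s : Multiset ℝ) (m : ℕ) :
    s.esymm m * s.esymm (m+2) ≤ (s.esymm (m+1))^2 := by
  rcases le_or_gt (s.esymm m * s.esymm (m+2)) 0 with h | h
  · exact h.trans (sq_nonneg _)
  · set N := Multiset.card s with hNdef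
    have hN : m + 2 ≤ N := by
      by_contra hc
      push_neg at hc
      rw [esymm_of_card_lt (show Multiset.card s < m + 2 from hc)] at h
      simp at h
    have hnew := newton_aux N s rfl m
    have hch : (N.choose m : ℝ) * (N.choose (m+2) : ℝ) ≤ (N.choose (m+1) : ℝ)^2 := by
      have := choose_log_concave hN
      have h2 : ((N.choose m * N.choose (m+2) : ℕ) : ℝ) ≤ ((N.choose (m+1) * N.choose (m+1) : ℕ) : ℝ) := by
        exact_mod_cast this
      push_cast at h2
      nlinarith [h2]
    have hc1pos : 0 < (N.choose (m+1) : ℝ) := by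
      have : 0 < N.choose (m+1) := Nat.choose_pos (by omega)
      exact_mod_cast this
    have hsq : (0:ℝ) ≤ (s.esymm (m+1))^2 := sq_nonneg _
    nlinarith [hnew, mul_le_mul_of_nonneg_right hch hsq, mul_pos hc1pos hc1pos]

lemma cone_erase (k : ℕ) (s : Multiset ℝ) (hpos : ∀ m, 1 ≤ m → m ≤ k → 0 < s.esymm m)
    (a : ℝ) (ha : a ∈ s) :
    ∀ m, m + 1 ≤ k → 0 < (s.erase a).esymm m := by
  intro m
  induction m using Nat.strong_induction_on with
  | _ m ihm =>
    intro hmk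
    rcases m with _ | m'
    · rw [esymm_zero']; norm_num
    · by_contra hneg
      push_neg at hneg
      set μ := s.erase a with hμ
      have hsa : a ::ₘ μ = s := Multiset.cons_erase ha
      have h1 : 0 < a * μ.esymm m' + μ.esymm (m'+1) := by
        have h := hpos (m'+1) (by omega) (by omega)
        rwa [← hsa, esymm_cons] at h
      have h2 : 0 < a * μ.esymm (m'+1) + μ.esymm (m'+2) := by
        have h := hpos (m'+2) (by omega) (by omega)
        rwa [← hsa, esymm_cons] at h
      have hm' : 0 < μ.esymm m' := ihm m' (Nat.lt_succ_self m') (by omega)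
      have hM3 := esymm_log_concave μ m'
      nlinarith [mul_pos hm' h2, mul_nonneg h1.le (neg_nonneg.mpr hneg), hM3]

lemma quot_mono (s : Multiset ℝ) (b d : ℕ)
    (hpos : ∀ m, 1 ≤ m → m ≤ b + 1 + d → 0 < s.esymm m) :
    s.esymm (b + d + 2) * s.esymm b ≤ s.esymm (b + d + 1) * s.esymm (b + 1) := by
  induction d with
  | zero =>
    have := esymm_log_concave s b
    nlinarith [this]
  | succ d ihd =>
    have IH := ihd (fun m h1 h2 => hpos m h1 (by omega))
    have hB : 0 < s.esymm (b+1) := hpos _ (by omega) (by omega)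
    have hP : 0 < s.esymm (b+d+1) := hpos _ (by omega) (by omega)
    have hQ : 0 < s.esymm (b+d+2) := hpos _ (by omega) (by omega)
    have hA : 0 ≤ s.esymm b := by
      rcases Nat.eq_zero_or_pos b with rfl | hb
      · rw [esymm_zero']; norm_num
      · exact (hpos b (by omega) (by omega)).le
    have hM3 : s.esymm (b+d+1) * s.esymm (b+d+3) ≤ (s.esymm (b+d+2))^2 := by
      have := esymm_log_concave s (b+d+1)
      rwa [show b+d+1+2 = b+d+3 from by omega, show b+d+1+1 = b+d+2 from by omega] at this
    rw [show b + (d+1) + 2 = b+d+3 from by omega, show b + (d+1) + 1 = b+d+2 from by omega]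
    rcases le_or_gt (s.esymm (b+d+3)) 0 with hR | hR
    · have hL : s.esymm (b+d+3) * s.esymm b ≤ 0 := mul_nonpos_of_nonpos_of_nonneg hR hA
      have h2 : 0 < s.esymm (b+d+2) * s.esymm (b+1) := mul_pos hQ hB
      linarith
    · have k1 := mul_le_mul_of_nonneg_right IH hR.le
      have k2 := mul_le_mul_of_nonneg_right hM3 hB.le
      have k3 : s.esymm (b+d+2) * (s.esymm (b+d+3) * s.esymm b)
          ≤ s.esymm (b+d+2) * (s.esymm (b+d+2) * s.esymm (b+1)) := by nlinarith [k1, k2]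
      exact (mul_le_mul_iff_right₀ hQ).mp k3
end StmtAux

section Bridge

open StmtAux

lemma esymm_eq_ms {n : ℕ} (m : ℕ) (y : Fin n → ℝ) :
    esymm n m y = (Finset.univ.val.map y).esymm m :=
  (Finset.esymm_map_val y Finset.univ m).symm

lemma esymmRemoved_eq_ms {n : ℕ} (m : ℕ) (i : Fin n) (y : Fin n → ℝ) :
    esymmRemoved n m i y = ((Finset.univ.val.map y).erase (y i)).esymm m := by
  have h1 : esymmRemoved n m i y = ((Finset.univ.erase i).val.map y).esymm m :=
    (Finset.esymm_map_val y (Finset.univ.erase i) m).symm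
  rw [h1, Finset.erase_val,
    Multiset.map_erase_of_mem y _ (Finset.mem_val.mpr (Finset.mem_univ i))]

lemma esymm_zero_fun {n : ℕ} (y : Fin n → ℝ) : esymm n 0 y = 1 := by
  rw [esymm_eq_ms, StmtAux.esymm_zero']

lemma split_esymm {n : ℕ} (m : ℕ) (y : Fin n → ℝ) (i : Fin n) :
    esymm n (m+1) y = y i * esymmRemoved n m i y + esymmRemoved n (m+1) i y := by
  have hmem : y i ∈ Finset.univ.val.map y :=
    Multiset.mem_map_of_mem y (Finset.mem_val.mpr (Finset.mem_univ i))
  conv_lhs => rw [esymm_eq_ms, ← Multiset.cons_erase hmem, StmtAux.esymm_cons]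
  rw [esymmRemoved_eq_ms, esymmRemoved_eq_ms]

lemma erase_diff_ms (S : Multiset ℝ) (a b : ℝ) (ha : a ∈ S) (hb : b ∈ S.erase a) (m : ℕ) :
    (S.erase a).esymm (m+1) - (S.erase b).esymm (m+1)
      = (b - a) * (((S.erase a).erase b).esymm m) := by
  have ha' : a ∈ S.erase b := by
    rcases eq_or_ne a b with rfl | hne
    · exact hb
    · exact (Multiset.mem_erase_of_ne hne).mpr ha
  set M := (S.erase a).erase b with hM
  have h1 : b ::ₘ M = S.erase a := Multiset.cons_erase hb
  have h2 : a ::ₘ M = S.erase b := by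
    rw [hM, ← Multiset.erase_comm]
    exact Multiset.cons_erase ha'
  rw [← h1, ← h2, StmtAux.esymm_cons, StmtAux.esymm_cons]
  ring

lemma esymm_differentiable {n m : ℕ} :
    Differentiable ℝ (fun y : Fin n → ℝ => esymm n m y) := by
  classical
  have heq : (fun y : Fin n → ℝ => esymm n m y)
      = fun y => ∑ s ∈ Finset.powersetCard m (Finset.univ : Finset (Fin n)), ∏ i ∈ s, y i := rfl
  rw [heq]
  refine Differentiable.fun_sum fun s _ => fun y => ?_
  have h : ∀ i ∈ s, HasFDerivAt (fun y : Fin n → ℝ => y i)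
      (ContinuousLinearMap.proj i : (Fin n → ℝ) →L[ℝ] ℝ) y := by
    intro i _
    have := (ContinuousLinearMap.proj (R := ℝ) (φ := fun _ : Fin n => ℝ) i).hasFDerivAt (x := y)
    exact this
  exact (HasFDerivAt.finset_prod h).differentiableAt

lemma esymmRemoved_invar {n : ℕ} (m : ℕ) (i : Fin n) (y : Fin n → ℝ) (t : ℝ) :
    esymmRemoved n m i (y + t • (Pi.single i 1 : Fin n → ℝ)) = esymmRemoved n m i y := by
  unfold esymmRemoved
  refine Finset.sum_congr rfl fun s hs => Finset.prod_congr rfl fun j hj => ?_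
  have hji : j ≠ i :=
    Finset.ne_of_mem_erase ((Finset.mem_powersetCard.mp hs).1 hj)
  simp [Pi.single_eq_of_ne hji]

lemma fderiv_esymm {n : ℕ} (m : ℕ) (y : Fin n → ℝ) (i : Fin n) :
    fderiv ℝ (fun z : Fin n → ℝ => esymm n (m+1) z) y (Pi.single i 1)
      = esymmRemoved n m i y := by
  rw [← (esymm_differentiable y).lineDeriv_eq_fderiv]
  unfold lineDeriv
  have heq : (fun t : ℝ => esymm n (m+1) (y + t • (Pi.single i 1 : Fin n → ℝ)))
      = fun t => (y i + t) * esymmRemoved n m i y + esymmRemoved n (m+1) i y := by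
    funext t
    rw [split_esymm m _ i, esymmRemoved_invar, esymmRemoved_invar]
    have hyi : (y + t • (Pi.single i 1 : Fin n → ℝ)) i = y i + t := by simp
    rw [hyi]
  rw [heq]
  have h : HasDerivAt
      (fun t : ℝ => (y i + t) * esymmRemoved n m i y + esymmRemoved n (m+1) i y)
      (esymmRemoved n m i y) 0 := by
    simpa using (((hasDerivAt_id (0:ℝ)).const_add (y i)).mul_const
      (esymmRemoved n m i y)).add_const (esymmRemoved n (m+1) i y)
  exact h.deriv

lemma etaVec_apply {n : ℕ} (y : Fin n → ℝ) (i : Fin n) :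
    etaVec y i = (∑ j, y j) - y i := by
  unfold etaVec
  exact Finset.sum_erase_eq_sub (Finset.mem_univ i)

lemma etaVec_add_smul {n : ℕ} (x v : Fin n → ℝ) (t : ℝ) :
    etaVec (x + t • v) = etaVec x + t • etaVec v := by
  funext i
  unfold etaVec
  simp only [Pi.add_apply, Pi.smul_apply, smul_eq_mul]
  rw [Finset.sum_add_distrib, Finset.mul_sum]

lemma etaVec_differentiable {n : ℕ} : Differentiable ℝ (fun y : Fin n → ℝ => etaVec y) := by
  unfold etaVec
  refine differentiable_pi.mpr fun i => Differentiable.fun_sum fun j _ => fun y => ?_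
  exact (ContinuousLinearMap.proj j : (Fin n → ℝ) →L[ℝ] ℝ).differentiableAt

lemma etaVec_single {n : ℕ} (i : Fin n) :
    etaVec (Pi.single i (1:ℝ)) = ∑ j ∈ Finset.univ.erase i, Pi.single j (1:ℝ) := by
  classical
  funext mm
  unfold etaVec
  rw [Finset.sum_apply]
  have h1 : ∑ j ∈ Finset.univ.erase mm, Pi.single i (1:ℝ) j
      = if i ∈ Finset.univ.erase mm then 1 else 0 := by
    simp only [Pi.single_apply]
    exact Finset.sum_ite_eq' _ i (fun _ => (1:ℝ))
  have h2 : ∑ j ∈ Finset.univ.erase i, Pi.single j (1:ℝ) mm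
      = if mm ∈ Finset.univ.erase i then 1 else 0 := by
    simp only [Pi.single_apply]
    exact Finset.sum_ite_eq _ mm (fun _ => (1:ℝ))
  rw [h1, h2]
  by_cases h : mm = i
  · subst h; simp
  · simp [Finset.mem_erase, h, Ne.symm h]

end Bridge

set_option maxHeartbeats 1000000 in
/-- For `0 ≤ l < k ≤ n` and `λ ∈ Γ̃_k` sorted decreasingly (so `η` is sorted
increasingly): the derivatives of `σ_k(η)/σ_l(η)` in the `η`-variables are
nonincreasing in the index, while those in the `λ`-variables are nondecreasing. -/
theorem statement_16 (n k l : ℕ) (hlk : l < k) (hkn : k ≤ n)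
    (lam : Fin n → ℝ) (hlam : lam ∈ GammaTilde n k)
    (hsort : ∀ i j : Fin n, i ≤ j → lam j ≤ lam i) :
    (∀ i j : Fin n, i ≤ j →
      fderiv ℝ (fun y : Fin n → ℝ => esymm n k y / esymm n l y) (etaVec lam)
          (Pi.single j 1) ≤
        fderiv ℝ (fun y : Fin n → ℝ => esymm n k y / esymm n l y) (etaVec lam)
          (Pi.single i 1)) ∧
    (∀ i j : Fin n, i ≤ j →
      fderiv ℝ (fun y : Fin n → ℝ => esymm n k (etaVec y) / esymm n l (etaVec y)) lam
          (Pi.single i 1) ≤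
        fderiv ℝ (fun y : Fin n → ℝ => esymm n k (etaVec y) / esymm n l (etaVec y)) lam
          (Pi.single j 1)) := by
  classical
  obtain ⟨kk, rfl⟩ : ∃ kk, k = kk + 1 := ⟨k - 1, by omega⟩
  set η := etaVec lam with hη
  set F : (Fin n → ℝ) → ℝ := fun y : Fin n → ℝ => esymm n (kk+1) y / esymm n l y with hF
  have hcone : ∀ m, 1 ≤ m → m ≤ kk + 1 → 0 < esymm n m η := fun m h1 h2 => hlam m h1 h2
  have hSL : 0 < esymm n l η := by
    rcases Nat.eq_zero_or_pos l with rfl | hl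
    · rw [esymm_zero_fun]; norm_num
    · exact hcone l hl (by omega)
  have hdivF : DifferentiableAt ℝ F η := by
    rw [hF]
    simp only [div_eq_mul_inv]
    exact (esymm_differentiable η).mul ((esymm_differentiable η).inv hSL.ne')
  -- directional derivatives of F
  have hD : ∀ i : Fin n, fderiv ℝ F η (Pi.single i 1)
      = (esymmRemoved n kk i η * esymm n l η
          - esymm n (kk+1) η * (if l = 0 then 0 else esymmRemoved n (l-1) i η))
        / (esymm n l η) ^ 2 := by
    intro i
    rcases Nat.eq_zero_or_pos l with rfl | hl
    · have hF1 : F = fun y : Fin n → ℝ => esymm n (kk+1) y := by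
        funext y; rw [hF]; simp only [esymm_zero_fun, div_one]
      rw [hF1, fderiv_esymm, if_pos rfl, esymm_zero_fun]
      norm_num
    · obtain ⟨ll, rfl⟩ : ∃ ll, l = ll + 1 := ⟨l - 1, by omega⟩
      rw [← hdivF.lineDeriv_eq_fderiv]
      unfold lineDeriv
      have heq : (fun t : ℝ => F (η + t • (Pi.single i 1 : Fin n → ℝ)))
          = fun t => ((η i + t) * esymmRemoved n kk i η + esymmRemoved n (kk+1) i η)
            / ((η i + t) * esymmRemoved n ll i η + esymmRemoved n (ll+1) i η) := by
        funext t
        rw [hF]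
        simp only
        rw [split_esymm kk _ i, split_esymm ll _ i, esymmRemoved_invar, esymmRemoved_invar,
          esymmRemoved_invar, esymmRemoved_invar]
        have hyi : (η + t • (Pi.single i 1 : Fin n → ℝ)) i = η i + t := by simp
        rw [hyi]
      rw [heq]
      have hden0 : (η i + 0) * esymmRemoved n ll i η + esymmRemoved n (ll+1) i η ≠ 0 := by
        rw [add_zero, ← split_esymm ll η i]
        exact hSL.ne'
      have hnum : HasDerivAt
          (fun t : ℝ => (η i + t) * esymmRemoved n kk i η + esymmRemoved n (kk+1) i η)
          (esymmRemoved n kk i η) 0 := by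
        simpa using (((hasDerivAt_id (0:ℝ)).const_add (η i)).mul_const
          (esymmRemoved n kk i η)).add_const (esymmRemoved n (kk+1) i η)
      have hden : HasDerivAt
          (fun t : ℝ => (η i + t) * esymmRemoved n ll i η + esymmRemoved n (ll+1) i η)
          (esymmRemoved n ll i η) 0 := by
        simpa using (((hasDerivAt_id (0:ℝ)).const_add (η i)).mul_const
          (esymmRemoved n ll i η)).add_const (esymmRemoved n (ll+1) i η)
      rw [(hnum.fun_div hden hden0).deriv]
      have hn0 : (η i + 0) * esymmRemoved n kk i η + esymmRemoved n (kk+1) i η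
          = esymm n (kk+1) η := by rw [add_zero, ← split_esymm kk η i]
      have hd0 : (η i + 0) * esymmRemoved n ll i η + esymmRemoved n (ll+1) i η
          = esymm n (ll+1) η := by rw [add_zero, ← split_esymm ll η i]
      rw [hn0, hd0, if_neg (by omega : ¬ (ll + 1 = 0)),
        show ll + 1 - 1 = ll from rfl]
  -- Part 1 : comparison of directional derivatives
  have hcomp : ∀ i j : Fin n, i ≤ j →
      fderiv ℝ F η (Pi.single j 1) ≤ fderiv ℝ F η (Pi.single i 1) := by
    intro i j hij
    rcases eq_or_lt_of_le hij with rfl | hlt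
    · exact le_refl _
    have hne : i ≠ j := ne_of_lt hlt
    have hab : η i ≤ η j := by
      rw [hη, etaVec_apply, etaVec_apply]
      have := hsort i j hij
      linarith
    rw [hD i, hD j]
    have hSL2 : 0 < (esymm n l η) ^ 2 := by positivity
    rw [div_le_div_iff_of_pos_right hSL2]
    -- multiset setup
    have hSm : ∀ m, esymm n m η = (Finset.univ.val.map η).esymm m := fun m => esymm_eq_ms m η
    have hRm : ∀ m (i' : Fin n), esymmRemoved n m i' η
        = ((Finset.univ.val.map η).erase (η i')).esymm m := fun m i' => esymmRemoved_eq_ms m i' η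
    set S : Multiset ℝ := Finset.univ.val.map η with hS
    have haS : η i ∈ S := Multiset.mem_map_of_mem η (Finset.mem_val.mpr (Finset.mem_univ i))
    have hbS : η j ∈ S.erase (η i) := by
      have h1 : η j ∈ ((Finset.univ.erase i).val.map η) :=
        Multiset.mem_map_of_mem η
          (Finset.mem_val.mpr (Finset.mem_erase.mpr ⟨hne.symm, Finset.mem_univ j⟩))
      rwa [Finset.erase_val,
        Multiset.map_erase_of_mem η _ (Finset.mem_val.mpr (Finset.mem_univ i))] at h1
    have hconeS : ∀ m, 1 ≤ m → m ≤ kk+1 → 0 < S.esymm m := fun m h1 h2 => by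
      rw [← hSm]; exact hcone m h1 h2
    have hpos1 : ∀ m, m + 1 ≤ kk+1 → 0 < (S.erase (η i)).esymm m :=
      StmtAux.cone_erase (kk+1) S hconeS (η i) haS
    have hpos2 : ∀ m, m + 1 ≤ kk → 0 < ((S.erase (η i)).erase (η j)).esymm m :=
      StmtAux.cone_erase kk (S.erase (η i)) (fun m h1 h2 => hpos1 m (by omega)) (η j) hbS
    rcases Nat.eq_zero_or_pos kk with rfl | hkk
    · -- k = 1, so l = 0
      obtain rfl : l = 0 := by omega
      rw [hRm 0 i, hRm 0 j, StmtAux.esymm_zero', StmtAux.esymm_zero']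
    · obtain ⟨kq, rfl⟩ : ∃ kq, kk = kq + 1 := ⟨kk - 1, by omega⟩
      have hdiffA : esymmRemoved n (kq+1) i η - esymmRemoved n (kq+1) j η
          = (η j - η i) * ((S.erase (η i)).erase (η j)).esymm kq := by
        rw [hRm, hRm]
        exact erase_diff_ms S (η i) (η j) haS hbS kq
      have hV : 0 < ((S.erase (η i)).erase (η j)).esymm kq := hpos2 kq (by omega)
      have hd : 0 ≤ η j - η i := by linarith
      rcases Nat.lt_or_ge l 2 with hl2 | hl2
      · -- l = 0 or 1 : the B-terms are equal
        have hBeq : (if l = 0 then 0 else esymmRemoved n (l-1) i η)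
            = (if l = 0 then 0 else esymmRemoved n (l-1) j η) := by
          interval_cases l
          · simp
          · simp only [if_neg (by omega : ¬ (1 = 0))]
            rw [show (1:ℕ) - 1 = 0 from rfl, hRm 0 i, hRm 0 j,
              StmtAux.esymm_zero', StmtAux.esymm_zero']
        rw [← hBeq]
        have key : 0 ≤ (esymmRemoved n (kq+1) i η - esymmRemoved n (kq+1) j η)
            * esymm n l η := by
          rw [hdiffA]
          have := mul_nonneg hd hV.le
          nlinarith [hSL]
        nlinarith [key]
      · -- l ≥ 2
        obtain ⟨lq, rfl⟩ : ∃ lq, l = lq + 2 := ⟨l - 2, by omega⟩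
        obtain ⟨dd, rfl⟩ : ∃ dd, kq = lq + 1 + dd := ⟨kq - (lq+1), by omega⟩
        have hdiffB : esymmRemoved n (lq+1) i η - esymmRemoved n (lq+1) j η
            = (η j - η i) * ((S.erase (η i)).erase (η j)).esymm lq := by
          rw [hRm, hRm]
          exact erase_diff_ms S (η i) (η j) haS hbS lq
        set S1 := S.erase (η i) with hS1
        set M := S1.erase (η j) with hM
        set U := M.esymm lq with hU
        set V := M.esymm (lq+1+dd) with hV'
        set P := S1.esymm (lq+1) with hP
        set Q := S1.esymm (lq+1+dd+1) with hQ
        have hUpos : 0 < U := by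
          rcases Nat.eq_zero_or_pos lq with rfl | hlq
          · rw [hU, StmtAux.esymm_zero']; norm_num
          · exact hpos2 lq (by omega)
        have hVpos : 0 < V := hpos2 (lq+1+dd) (by omega)
        have hPpos : 0 < P := hpos1 (lq+1) (by omega)
        have hQpos : 0 < Q := hpos1 (lq+1+dd+1) (by omega)
        -- Step 1 : SK * P ≤ SL * Q
        have hsplitK : esymm n (lq+1+dd+1+1) η = η i * Q + S1.esymm (lq+1+dd+2) := by
          rw [hSm]
          conv_lhs => rw [← Multiset.cons_erase haS, StmtAux.esymm_cons]
        have hsplitL : esymm n (lq+2) η = η i * P + S1.esymm (lq+2) := by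
          rw [hSm]
          conv_lhs => rw [← Multiset.cons_erase haS, StmtAux.esymm_cons]
        have hQM1 := StmtAux.quot_mono S1 (lq+1) dd (fun m h1 h2 => hpos1 m (by omega))
        have hstep1 : esymm n (lq+1+dd+1+1) η * P ≤ esymm n (lq+2) η * Q := by
          have e3 : esymm n (lq+1+dd+1+1) η * P - esymm n (lq+2) η * Q
              = S1.esymm (lq+1+dd+2) * P - S1.esymm (lq+2) * Q := by
            rw [hsplitK, hsplitL]; ring
          have hQM1' : S1.esymm (lq+1+dd+2) * S1.esymm (lq+1)
              ≤ S1.esymm (lq+1+dd+1) * S1.esymm (lq+1+1) := hQM1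
          nlinarith [hQM1', e3]
        -- Step 2 : Q * U ≤ P * V
        have hsplitQ : Q = η j * M.esymm (lq+1+dd) + M.esymm (lq+1+dd+1) := by
          rw [hQ]
          conv_lhs => rw [← Multiset.cons_erase hbS, StmtAux.esymm_cons]
        have hsplitP : P = η j * M.esymm lq + M.esymm (lq+1) := by
          rw [hP]
          conv_lhs => rw [← Multiset.cons_erase hbS, StmtAux.esymm_cons]
        have hQM2 := StmtAux.quot_mono M lq dd (fun m h1 h2 => hpos2 m (by omega))
        have hstep2 : Q * U ≤ P * V := by
          have e4 : Q * U - P * V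
              = M.esymm (lq+1+dd+1) * U - M.esymm (lq+1) * V := by
            rw [hsplitQ, hsplitP, hU, hV']; ring
          have hQM2' : M.esymm (lq+1+dd+1) * U ≤ V * M.esymm (lq+1) := by
            have h := hQM2
            rw [show lq+dd+2 = lq+1+dd+1 from by omega,
              show lq+dd+1 = lq+1+dd from by omega] at h
            rw [hU, hV']
            linarith [h]
          nlinarith [hQM2', e4]
        -- bracket : SK * U ≤ SL * V
        have hbracket : esymm n (lq+1+dd+1+1) η * U ≤ esymm n (lq+2) η * V := by
          have k1 := mul_le_mul_of_nonneg_right hstep1 hUpos.le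
          have k2 := mul_le_mul_of_nonneg_left hstep2 hSL.le
          have k3 : P * (esymm n (lq+1+dd+1+1) η * U) ≤ P * (esymm n (lq+2) η * V) := by
            calc P * (esymm n (lq+1+dd+1+1) η * U)
                = (esymm n (lq+1+dd+1+1) η * P) * U := by ring
              _ ≤ (esymm n (lq+2) η * Q) * U := k1
              _ = esymm n (lq+2) η * (Q * U) := by ring
              _ ≤ esymm n (lq+2) η * (P * V) := k2
              _ = P * (esymm n (lq+2) η * V) := by ring
          exact (mul_le_mul_iff_right₀ hPpos).mp k3
        -- conclude
        simp only [if_neg (by omega : ¬ (lq + 2 = 0)), show lq + 2 - 1 = lq + 1 from rfl]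
        have e1 : esymmRemoved n (lq+1+dd+1) i η * esymm n (lq+2) η
            - esymmRemoved n (lq+1+dd+1) j η * esymm n (lq+2) η
            = ((η j - η i) * V) * esymm n (lq+2) η := by
          rw [← sub_mul, hdiffA, hV']
        have e2 : esymm n (lq+1+dd+1+1) η * esymmRemoved n (lq+1) i η
            - esymm n (lq+1+dd+1+1) η * esymmRemoved n (lq+1) j η
            = esymm n (lq+1+dd+1+1) η * ((η j - η i) * U) := by
          rw [← mul_sub, hdiffB, hU]
        have hstep := mul_le_mul_of_nonneg_left hbracket hd
        nlinarith [hstep, e1, e2]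
  constructor
  · exact hcomp
  · intro i j hij
    have hGdiff : DifferentiableAt ℝ
        (fun y : Fin n → ℝ => esymm n (kk+1) (etaVec y) / esymm n l (etaVec y)) lam := by
      have h := hdivF.comp lam (etaVec_differentiable lam)
      exact h
    have hlinG : ∀ v : Fin n → ℝ,
        fderiv ℝ (fun y : Fin n → ℝ => esymm n (kk+1) (etaVec y) / esymm n l (etaVec y)) lam v
          = fderiv ℝ F η (etaVec v) := by
      intro v
      rw [← hGdiff.lineDeriv_eq_fderiv, ← hdivF.lineDeriv_eq_fderiv]
      unfold lineDeriv
      congr 1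
      funext t
      rw [hF]
      simp only
      rw [etaVec_add_smul, ← hη]
    have hGval : ∀ i' : Fin n,
        fderiv ℝ (fun y : Fin n → ℝ => esymm n (kk+1) (etaVec y) / esymm n l (etaVec y)) lam
          (Pi.single i' 1)
        = (∑ j' ∈ Finset.univ.erase i', fderiv ℝ F η (Pi.single j' 1)) := by
      intro i'
      rw [hlinG, etaVec_single, map_sum]
    rw [hGval i, hGval j,
      Finset.sum_erase_eq_sub (Finset.mem_univ i), Finset.sum_erase_eq_sub (Finset.mem_univ j)]
    have := hcomp i j hij
    linarith
end
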